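/- arXiv:2507.15397 — 4 statements merged into one kernel-verified Lean document; each statement's English description precedes it below -/
import Mathlib

section
/- (Tweedie's formula) Let p be a probability density on ℝ^d, σ > 0, and define p_σ(z) = (2πσ²)^{-d/2} ∫_{ℝ^d} p(x) exp(-‖z - x‖²/(2σ²)) dx and the minimum mean square error denoiser MMSE_σ(z) = ( ∫_{ℝ^d} x p(x) exp(-‖z - x‖²/(2σ²)) dx ) / ( ∫_{ℝ^d} p(x) exp(-‖z - x‖²/(2σ²)) dx ). Then for every z ∈ ℝ^d, MMSE_σ(z) = z + σ² ∇ ln p_σ(z); equivalently, −∇ ln p_σ(z) = (z − MMSE_σ(z)) / σ². -/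
open MeasureTheory Real

noncomputable section

/-- `ℝ^d` as a Euclidean space. -/
abbrev Euc (d : ℕ) := EuclideanSpace ℝ (Fin d)

/-- The Gaussian-smoothed density `p_σ(z) = (2πσ²)^{-d/2} ∫ p(x) exp(-‖z-x‖²/(2σ²)) dx`. -/
def smoothed (d : ℕ) (p : Euc d → ℝ) (σ : ℝ) (z : Euc d) : ℝ :=
  (2 * π * σ ^ 2) ^ (-(d : ℝ) / 2) *
    ∫ x : Euc d, p x * Real.exp (-‖z - x‖ ^ 2 / (2 * σ ^ 2))

/-- The minimum mean square error denoiser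
`MMSE_σ(z) = (∫ x p(x) exp(-‖z-x‖²/(2σ²)) dx) / (∫ p(x) exp(-‖z-x‖²/(2σ²)) dx)`,
i.e. the posterior mean `E[X | X + σε = z]`. -/
def mmse (d : ℕ) (p : Euc d → ℝ) (σ : ℝ) (z : Euc d) : Euc d :=
  (∫ x : Euc d, p x * Real.exp (-‖z - x‖ ^ 2 / (2 * σ ^ 2)))⁻¹ •
    ∫ x : Euc d, (p x * Real.exp (-‖z - x‖ ^ 2 / (2 * σ ^ 2))) • x

set_option maxHeartbeats 2000000 in
set_option synthInstance.maxHeartbeats 200000 in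
/-- **Tweedie's formula**: `MMSE_σ(z) = z + σ² ∇ ln p_σ(z)`, equivalently
`-∇ ln p_σ(z) = (z - MMSE_σ(z))/σ²`. -/
theorem tweedie_formula
    (d : ℕ) (p : Euc d → ℝ)
    (hmeas : Measurable p) (hnonneg : ∀ x, 0 ≤ p x)
    (hint : (∫ x : Euc d, p x) = 1)
    (σ : ℝ) (hσ : 0 < σ) :
    ∀ z : Euc d,
      mmse d p σ z = z + (σ ^ 2) • gradient (fun w => Real.log (smoothed d p σ w)) z ∧
      -gradient (fun w => Real.log (smoothed d p σ w)) z = (σ ^ 2)⁻¹ • (z - mmse d p σ z) := by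
  intro z
  have hσ2 : (0:ℝ) < σ ^ 2 := by positivity
  have hσ2ne : (σ:ℝ) ^ 2 ≠ 0 := ne_of_gt hσ2
  have hσne : σ ≠ 0 := ne_of_gt hσ
  have hp_int : Integrable p := integrable_of_integral_eq_one hint
  set f : Euc d → Euc d → ℝ :=
    fun w a => p a * Real.exp (-‖w - a‖ ^ 2 / (2 * σ ^ 2)) with hf
  -- basic facts about f
  have he_pos : ∀ w a : Euc d, 0 < Real.exp (-‖w - a‖ ^ 2 / (2 * σ ^ 2)) :=
    fun w a => Real.exp_pos _
  have he_le_one : ∀ w a : Euc d, Real.exp (-‖w - a‖ ^ 2 / (2 * σ ^ 2)) ≤ 1 := by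
    intro w a
    apply Real.exp_le_one_iff.mpr
    rw [neg_div]
    have : (0:ℝ) ≤ ‖w - a‖ ^ 2 / (2 * σ ^ 2) := by positivity
    linarith
  have hf_nonneg : ∀ w a : Euc d, 0 ≤ f w a :=
    fun w a => mul_nonneg (hnonneg a) (he_pos w a).le
  have hf_le : ∀ w a : Euc d, f w a ≤ p a := by
    intro w a
    calc f w a ≤ p a * 1 := mul_le_mul_of_nonneg_left (he_le_one w a) (hnonneg a)
    _ = p a := mul_one _
  have hecont : ∀ w : Euc d, Continuous (fun a : Euc d => Real.exp (-‖w - a‖ ^ 2 / (2 * σ ^ 2))) := by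
    intro w; fun_prop
  have hf_meas : ∀ w : Euc d, AEStronglyMeasurable (f w) volume := by
    intro w
    exact (hmeas.mul (hecont w).measurable).aestronglyMeasurable
  have hf_int : ∀ w : Euc d, Integrable (f w) := by
    intro w
    refine hp_int.mono' (hf_meas w) (Filter.Eventually.of_forall fun a => ?_)
    rw [Real.norm_eq_abs, abs_of_nonneg (hf_nonneg w a)]
    exact hf_le w a
  -- positivity of the normalizer
  have hq_pos : 0 < ∫ a, f z a := by
    rw [integral_pos_iff_support_of_nonneg (hf_nonneg z) (hf_int z)]
    have hsupp : Function.support (f z) = Function.support p := by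
      ext a
      simp [hf, Function.mem_support, mul_ne_zero_iff, Real.exp_ne_zero]
    rw [hsupp]
    exact (integral_pos_iff_support_of_nonneg hnonneg hp_int).mp (by rw [hint]; norm_num)
  have hq_ne : (∫ a, f z a) ≠ 0 := ne_of_gt hq_pos
  -- key bound on t * exp(-t²/(2σ²))
  have key : ∀ t : ℝ, 0 ≤ t → t * Real.exp (-t ^ 2 / (2 * σ ^ 2)) ≤ 2 * σ := by
    intro t ht
    rcases le_or_gt t (2 * σ) with h | h
    · calc t * Real.exp (-t ^ 2 / (2 * σ ^ 2)) ≤ t * 1 := by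
            refine mul_le_mul_of_nonneg_left ?_ ht
            apply Real.exp_le_one_iff.mpr
            rw [neg_div]
            have : (0:ℝ) ≤ t ^ 2 / (2 * σ ^ 2) := by positivity
            linarith
      _ = t := mul_one _
      _ ≤ 2 * σ := h
    · have ht0 : 0 < t := lt_trans (by positivity) h
      have hu : (0:ℝ) < t ^ 2 / (2 * σ ^ 2) := by positivity
      have hle : t ^ 2 / (2 * σ ^ 2) ≤ Real.exp (t ^ 2 / (2 * σ ^ 2)) := by
        have := Real.add_one_le_exp (t ^ 2 / (2 * σ ^ 2))
        linarith
      have h1 : Real.exp (-t ^ 2 / (2 * σ ^ 2)) ≤ (t ^ 2 / (2 * σ ^ 2))⁻¹ := by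
        rw [neg_div, Real.exp_neg]
        exact inv_anti₀ hu hle
      calc t * Real.exp (-t ^ 2 / (2 * σ ^ 2)) ≤ t * (t ^ 2 / (2 * σ ^ 2))⁻¹ :=
            mul_le_mul_of_nonneg_left h1 ht
        _ = 2 * σ ^ 2 / t := by field_simp
        _ ≤ 2 * σ := by
            rw [div_le_iff₀ ht0]
            nlinarith
  have hbound : ∀ w a : Euc d, f w a * ‖w - a‖ ≤ 2 * σ * p a := by
    intro w a
    have := key ‖w - a‖ (norm_nonneg _)
    calc f w a * ‖w - a‖ = p a * (‖w - a‖ * Real.exp (-‖w - a‖ ^ 2 / (2 * σ ^ 2))) := by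
          rw [hf]; ring
      _ ≤ p a * (2 * σ) := mul_le_mul_of_nonneg_left this (hnonneg a)
      _ = 2 * σ * p a := by ring
  -- integrability of the vector-valued integrands
  have hsm_vec : ∀ (g : Euc d → Euc d), Continuous g →
      AEStronglyMeasurable (fun a => f z a • g a) volume := by
    intro g hg
    exact (hf_meas z).smul hg.aestronglyMeasurable
  have hN_int : Integrable (fun a => f z a • a) := by
    refine ((hp_int.const_mul (2 * σ + ‖z‖)).mono'
      (hsm_vec _ continuous_id) (Filter.Eventually.of_forall fun a => ?_))
    rw [norm_smul, Real.norm_eq_abs, abs_of_nonneg (hf_nonneg z a)]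
    have h1 : ‖a‖ ≤ ‖z - a‖ + ‖z‖ := by
      calc ‖a‖ = ‖z - (z - a)‖ := by congr 1; abel
      _ ≤ ‖z‖ + ‖z - a‖ := norm_sub_le _ _
      _ = ‖z - a‖ + ‖z‖ := by ring
    calc f z a * ‖a‖ ≤ f z a * (‖z - a‖ + ‖z‖) :=
          mul_le_mul_of_nonneg_left h1 (hf_nonneg z a)
      _ = f z a * ‖z - a‖ + f z a * ‖z‖ := by ring
      _ ≤ 2 * σ * p a + p a * ‖z‖ :=
          add_le_add (hbound z a) (mul_le_mul_of_nonneg_right (hf_le z a) (norm_nonneg z))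
      _ = (2 * σ + ‖z‖) * p a := by ring
  have hzsub_int : Integrable (fun a => f z a • (z - a)) := by
    refine ((hp_int.const_mul (2 * σ)).mono'
      (hsm_vec _ (continuous_const.sub continuous_id)) (Filter.Eventually.of_forall fun a => ?_))
    rw [norm_smul, Real.norm_eq_abs, abs_of_nonneg (hf_nonneg z a)]
    exact hbound z a
  -- pointwise derivative in w
  have hdiff : ∀ (a w : Euc d), HasFDerivAt (fun w => f w a)
      ((-(σ ^ 2)⁻¹ * f w a) • innerSL ℝ (w - a)) w := by
    intro a w
    have h1 := ((hasFDerivAt_id (𝕜 := ℝ) w).sub_const a).norm_sq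
    have h2 := h1.const_mul (-(2 * σ ^ 2)⁻¹)
    have h3 := h2.exp
    have h4 := h3.const_mul (p a)
    simp only [id_eq] at h4
    have hfun : (fun w : Euc d => p a * Real.exp (-(2 * σ ^ 2)⁻¹ * ‖w - a‖ ^ 2))
        = fun w : Euc d => f w a := by
      funext w; rw [hf]; congr 1; ring
    rw [hfun] at h4
    refine h4.congr_fderiv ?_
    ext y
    have hexp : (-(2 * σ ^ 2)⁻¹ * ‖w - a‖ ^ 2) = -‖w - a‖ ^ 2 / (2 * σ ^ 2) := by ring
    simp only [ContinuousLinearMap.smul_apply, ContinuousLinearMap.coe_smul', Pi.smul_apply,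
      ContinuousLinearMap.coe_comp', Function.comp_apply, ContinuousLinearMap.coe_id', id_eq,
      innerSL_apply_apply, smul_eq_mul, hexp, hf]
    field_simp
    ring
  have hsmul_inner : ∀ (c : ℝ) (u : Euc d), c • innerSL ℝ u = innerSL ℝ (c • u) := by
    intro c u; ext y; simp [real_inner_smul_left]
  -- differentiation under the integral sign
  have hF'_meas : AEStronglyMeasurable
      (fun a : Euc d => (-(σ ^ 2)⁻¹ * f z a) • innerSL ℝ (z - a)) volume := by
    refine AEStronglyMeasurable.fun_smul ?_ ?_
    · exact ((hmeas.mul (hecont z).measurable).const_mul (-(σ ^ 2)⁻¹)).aestronglyMeasurable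
    · exact ((innerSL ℝ (E := Euc d)).continuous.comp
        (continuous_const.sub continuous_id)).aestronglyMeasurable
  have hFderiv : HasFDerivAt (fun w => ∫ a, f w a)
      (∫ a, (-(σ ^ 2)⁻¹ * f z a) • innerSL ℝ (z - a)) z := by
    refine hasFDerivAt_integral_of_dominated_of_fderiv_le (𝕜 := ℝ)
      (bound := fun a => 2 * σ⁻¹ * p a) (Metric.ball_mem_nhds z zero_lt_one)
      (Filter.Eventually.of_forall fun w => hf_meas w) (hf_int z) hF'_meas
      (Filter.Eventually.of_forall fun a => fun w _ => ?_)
      ((hp_int.const_mul (2 * σ⁻¹)))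
      (Filter.Eventually.of_forall fun a => fun w _ => hdiff a w)
    rw [hsmul_inner, innerSL_apply_norm, norm_smul, Real.norm_eq_abs, abs_mul, abs_neg,
      abs_of_nonneg (inv_nonneg.mpr hσ2.le), abs_of_nonneg (hf_nonneg w a)]
    calc (σ ^ 2)⁻¹ * f w a * ‖w - a‖ ≤ (σ ^ 2)⁻¹ * (2 * σ * p a) := by
          rw [mul_assoc]
          exact mul_le_mul_of_nonneg_left (hbound w a) (inv_nonneg.mpr hσ2.le)
      _ = 2 * σ⁻¹ * p a := by field_simp
  -- rewrite the derivative as an inner product with a fixed vector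
  set v : Euc d := ∫ a, (-(σ ^ 2)⁻¹ * f z a) • (z - a) with hv
  have hintg_eq : (fun a : Euc d => (-(σ ^ 2)⁻¹ * f z a) • innerSL ℝ (z - a))
      = fun a => innerSL ℝ ((-(σ ^ 2)⁻¹ * f z a) • (z - a)) := by
    funext a
    exact hsmul_inner _ _
  have hintg_int : Integrable (fun a : Euc d => (-(σ ^ 2)⁻¹ * f z a) • (z - a)) := by
    have : (fun a : Euc d => (-(σ ^ 2)⁻¹ * f z a) • (z - a))
        = fun a => (-(σ ^ 2)⁻¹) • (f z a • (z - a)) := by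
      funext a; rw [smul_smul]
    rw [this]
    exact hzsub_int.fun_smul _
  have hFderiv' : HasFDerivAt (fun w => ∫ a, f w a) (innerSL ℝ v) z := by
    rw [hintg_eq] at hFderiv
    rwa [ContinuousLinearMap.integral_comp_comm _ hintg_int] at hFderiv
  -- compute v
  have hv_eq : v = (-(σ ^ 2)⁻¹) • ((∫ a, f z a) • z - ∫ a, f z a • a) := by
    rw [hv]
    have h1 : (fun a : Euc d => (-(σ ^ 2)⁻¹ * f z a) • (z - a))
        = fun a => (-(σ ^ 2)⁻¹) • (f z a • (z - a)) := by
      funext a; rw [smul_smul]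
    rw [h1, integral_smul]
    congr 1
    have h2 : (fun a : Euc d => f z a • (z - a)) = fun a => f z a • z - f z a • a := by
      funext a; rw [smul_sub]
    rw [h2, integral_sub ((hf_int z).smul_const z) hN_int, integral_smul_const]
  -- gradient of log of smoothed
  set C : ℝ := (2 * π * σ ^ 2) ^ (-(d : ℝ) / 2) with hC
  have hC_pos : 0 < C := by
    rw [hC]
    exact Real.rpow_pos_of_pos (by positivity) _
  have hCq_pos : 0 < C * ∫ a, f z a := mul_pos hC_pos hq_pos
  have hlog : HasFDerivAt (fun w => Real.log (smoothed d p σ w))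
      (innerSL ℝ ((∫ a, f z a)⁻¹ • v)) z := by
    have hsm : (fun w => Real.log (smoothed d p σ w))
        = fun w => Real.log (C * ∫ a, f w a) := rfl
    rw [hsm]
    have hin : HasFDerivAt (fun w => C * ∫ a, f w a) (C • innerSL ℝ v) z :=
      hFderiv'.const_mul C
    have hcomp := (Real.hasDerivAt_log (ne_of_gt hCq_pos)).comp_hasFDerivAt z hin
    refine hcomp.congr_fderiv ?_
    ext y
    simp only [ContinuousLinearMap.smul_apply, innerSL_apply_apply, smul_eq_mul,
      real_inner_smul_left]
    field_simp
  have hgrad : gradient (fun w => Real.log (smoothed d p σ w)) z = (∫ a, f z a)⁻¹ • v := by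
    apply HasGradientAt.gradient
    apply hasGradientAt_iff_hasFDerivAt.mpr
    exact hlog
  -- final algebra
  have hmm : mmse d p σ z = (∫ a, f z a)⁻¹ • ∫ a, f z a • a := rfl
  have h1 : mmse d p σ z = z + (σ ^ 2) • gradient (fun w => Real.log (smoothed d p σ w)) z := by
    rw [hmm, hgrad, hv_eq]
    match_scalars <;> field_simp <;> ring
  refine ⟨h1, ?_⟩
  rw [h1, hgrad, hv_eq]
  match_scalars <;> field_simp <;> ring


end
end

section
/- (Second-order Tweedie identity) Let p be a probability density on ℝ^d and σ > 0. Define p_σ(z) = (2πσ²)^{-d/2} ∫_{ℝ^d} p(x) exp(-‖z - x‖²/(2σ²)) dx, the posterior first moment m_σ(z) = ( ∫ (z - x) p(x) exp(-‖z - x‖²/(2σ²)) dx ) / ( ∫ p(x) exp(-‖z - x‖²/(2σ²)) dx ) ∈ ℝ^d, and the posterior covariance matrix C_σ(z) = ( ∫ (z - x)(z - x)^T p(x) exp(-‖z - x‖²/(2σ²)) dx ) / ( ∫ p(x) exp(-‖z - x‖²/(2σ²)) dx ) − m_σ(z) m_σ(z)^T. Then for every z ∈ ℝ^d, −∇² ln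 p_σ(z) = (1/σ²) ( I_d − (1/σ²) C_σ(z) ); in particular, since C_σ(z) is positive semidefinite, −∇² ln p_σ(z) ⪯ (1/σ²) I_d. -/
open MeasureTheory Real

noncomputable section

/-- The Hessian matrix of `f` at `z`, with entries the second partial derivatives along the
standard basis directions. -/
def hessMat (d : ℕ) (f : Euc d → ℝ) (z : Euc d) : Matrix (Fin d) (Fin d) ℝ :=
  Matrix.of fun i j =>
    fderiv ℝ (fun y => fderiv ℝ f y (EuclideanSpace.single j 1)) z (EuclideanSpace.single i 1)

/-- The posterior first moment
`m_σ(z) = (∫ (z-x) p(x) exp(-‖z-x‖²/(2σ²)) dx) / (∫ p(x) exp(-‖z-x‖²/(2σ²)) dx)`. -/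
def postMean (d : ℕ) (p : Euc d → ℝ) (σ : ℝ) (z : Euc d) : Euc d :=
  (∫ x : Euc d, p x * Real.exp (-‖z - x‖ ^ 2 / (2 * σ ^ 2)))⁻¹ •
    ∫ x : Euc d, (p x * Real.exp (-‖z - x‖ ^ 2 / (2 * σ ^ 2))) • (z - x)

/-- The posterior covariance matrix
`C_σ(z) = (∫ (z-x)(z-x)ᵀ p(x) e^{-‖z-x‖²/(2σ²)} dx)/(∫ p(x) e^{-‖z-x‖²/(2σ²)} dx) − m_σ(z) m_σ(z)ᵀ`. -/
def postCov (d : ℕ) (p : Euc d → ℝ) (σ : ℝ) (z : Euc d) : Matrix (Fin d) (Fin d) ℝ :=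
  Matrix.of fun i j =>
    (∫ x : Euc d, p x * Real.exp (-‖z - x‖ ^ 2 / (2 * σ ^ 2)))⁻¹ *
      (∫ x : Euc d, (p x * Real.exp (-‖z - x‖ ^ 2 / (2 * σ ^ 2))) * ((z - x) i * (z - x) j))
      - postMean d p σ z i * postMean d p σ z j

namespace TweedieAux

/-- Gaussian weight. -/
def expw (σ : ℝ) (z x : Euc d) : ℝ := Real.exp (-‖z - x‖ ^ 2 / (2 * σ ^ 2))

variable {d : ℕ} {σ : ℝ}

lemma expw_pos (z x : Euc d) : 0 < expw σ z x := Real.exp_pos _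

lemma expw_le_one (hσ : 0 < σ) (z x : Euc d) : expw σ z x ≤ 1 := by
  rw [expw, Real.exp_le_one_iff]
  have h1 : (0:ℝ) < 2 * σ ^ 2 := by positivity
  have h2 : (0:ℝ) ≤ ‖z - x‖ ^ 2 := by positivity
  rw [div_nonpos_iff]
  right; constructor <;> nlinarith

lemma sq_mul_expw_le (hσ : 0 < σ) (z x : Euc d) :
    ‖z - x‖ ^ 2 * expw σ z x ≤ 2 * σ ^ 2 := by
  have h1 : (0:ℝ) < 2 * σ ^ 2 := by positivity
  set t := ‖z - x‖ ^ 2 with ht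
  have ht0 : 0 ≤ t := by positivity
  have hs : t / (2 * σ ^ 2) ≤ Real.exp (t / (2 * σ ^ 2)) := by
    have := Real.add_one_le_exp (t / (2 * σ ^ 2))
    linarith
  have hexp : expw σ z x = (Real.exp (t / (2 * σ ^ 2)))⁻¹ := by
    rw [expw, ← Real.exp_neg, neg_div]
  rw [hexp]
  rw [mul_inv_le_iff₀ (Real.exp_pos _)]
  calc t = (t / (2 * σ ^ 2)) * (2 * σ ^ 2) := by field_simp
    _ ≤ Real.exp (t / (2 * σ ^ 2)) * (2 * σ ^ 2) := by
        exact mul_le_mul_of_nonneg_right hs h1.le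
    _ = 2 * σ ^ 2 * Real.exp (t / (2 * σ ^ 2)) := by ring

lemma norm_mul_expw_le (hσ : 0 < σ) (z x : Euc d) :
    ‖z - x‖ * expw σ z x ≤ (1 + 2 * σ ^ 2) / 2 := by
  have hE0 : 0 ≤ expw σ z x := (expw_pos z x).le
  have hE1 := expw_le_one hσ z x
  have h2 := sq_mul_expw_le hσ z x
  have ht : ‖z - x‖ ≤ (1 + ‖z - x‖ ^ 2) / 2 := by nlinarith [sq_nonneg (‖z - x‖ - 1)]
  calc ‖z - x‖ * expw σ z x ≤ (1 + ‖z - x‖ ^ 2) / 2 * expw σ z x :=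
        mul_le_mul_of_nonneg_right ht hE0
    _ = (expw σ z x + ‖z - x‖ ^ 2 * expw σ z x) / 2 := by ring
    _ ≤ (1 + 2 * σ ^ 2) / 2 := by linarith

lemma abs_coord_le_norm (v : Euc d) (i : Fin d) : |v i| ≤ ‖v‖ := by
  rw [EuclideanSpace.norm_eq]
  have : |v i| = Real.sqrt (‖v i‖ ^ 2) := by
    rw [Real.sqrt_sq_eq_abs]; simp
  rw [this]
  apply Real.sqrt_le_sqrt
  exact Finset.single_le_sum (f := fun j => ‖v j‖ ^ 2) (fun j _ => by positivity) (Finset.mem_univ i)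

lemma continuous_expw (z : Euc d) : Continuous fun x : Euc d => expw σ z x := by
  unfold expw; fun_prop

end TweedieAux

section Integr

open TweedieAux

variable {d : ℕ} {σ : ℝ} {p : Euc d → ℝ}

lemma meas_pE (hmeas : Measurable p) (z : Euc d) :
    AEStronglyMeasurable (fun x => p x * expw σ z x) (volume : Measure (Euc d)) :=
  (hmeas.mul (continuous_expw z).measurable).aestronglyMeasurable

lemma int_pE (hσ : 0 < σ) (hmeas : Measurable p) (hnonneg : ∀ x, 0 ≤ p x)
    (hp : Integrable p) (z : Euc d) :
    Integrable (fun x => p x * expw σ z x) := by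
  refine hp.mono' (meas_pE hmeas z) ?_
  filter_upwards with x
  have h1 : 0 ≤ p x * expw σ z x := mul_nonneg (hnonneg x) (expw_pos z x).le
  rw [Real.norm_eq_abs, abs_of_nonneg h1]
  calc p x * expw σ z x ≤ p x * 1 :=
        mul_le_mul_of_nonneg_left (expw_le_one hσ z x) (hnonneg x)
    _ = p x := mul_one _
  
lemma int_pE_vec (hσ : 0 < σ) (hmeas : Measurable p) (hnonneg : ∀ x, 0 ≤ p x)
    (hp : Integrable p) (z : Euc d) :
    Integrable (fun x => (p x * expw σ z x) • (z - x) : Euc d → Euc d) := by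
  refine ((hp.const_mul ((1 + 2 * σ ^ 2) / 2)).mono' ?_ ?_)
  · exact (meas_pE hmeas z).smul
      (Continuous.aestronglyMeasurable (by fun_prop))
  · filter_upwards with x
    rw [norm_smul, Real.norm_eq_abs,
      abs_of_nonneg (mul_nonneg (hnonneg x) (expw_pos z x).le)]
    calc p x * expw σ z x * ‖z - x‖ = p x * (‖z - x‖ * expw σ z x) := by ring
      _ ≤ p x * ((1 + 2 * σ ^ 2) / 2) :=
          mul_le_mul_of_nonneg_left (norm_mul_expw_le hσ z x) (hnonneg x)
      _ = (1 + 2 * σ ^ 2) / 2 * p x := by ring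

lemma int_pE_coord (hσ : 0 < σ) (hmeas : Measurable p) (hnonneg : ∀ x, 0 ≤ p x)
    (hp : Integrable p) (z : Euc d) (j : Fin d) :
    Integrable (fun x => p x * expw σ z x * (z - x) j) := by
  refine ((hp.const_mul ((1 + 2 * σ ^ 2) / 2)).mono' ?_ ?_)
  · exact (meas_pE hmeas z).mul (Continuous.aestronglyMeasurable (by fun_prop))
  · filter_upwards with x
    rw [Real.norm_eq_abs, abs_mul,
      abs_of_nonneg (mul_nonneg (hnonneg x) (expw_pos z x).le)]
    calc p x * expw σ z x * |(z - x) j| ≤ p x * expw σ z x * ‖z - x‖ := by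
          exact mul_le_mul_of_nonneg_left (abs_coord_le_norm _ j)
            (mul_nonneg (hnonneg x) (expw_pos z x).le)
      _ = p x * (‖z - x‖ * expw σ z x) := by ring
      _ ≤ p x * ((1 + 2 * σ ^ 2) / 2) :=
          mul_le_mul_of_nonneg_left (norm_mul_expw_le hσ z x) (hnonneg x)
      _ = (1 + 2 * σ ^ 2) / 2 * p x := by ring

lemma int_pE_coord2 (hσ : 0 < σ) (hmeas : Measurable p) (hnonneg : ∀ x, 0 ≤ p x)
    (hp : Integrable p) (z : Euc d) (i j : Fin d) :
    Integrable (fun x => p x * expw σ z x * ((z - x) i * (z - x) j)) := by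
  refine ((hp.const_mul (2 * σ ^ 2)).mono' ?_ ?_)
  · exact (meas_pE hmeas z).mul (Continuous.aestronglyMeasurable (by fun_prop))
  · filter_upwards with x
    have hpe : 0 ≤ p x * expw σ z x := mul_nonneg (hnonneg x) (expw_pos z x).le
    rw [Real.norm_eq_abs, abs_mul, abs_of_nonneg hpe, abs_mul]
    calc p x * expw σ z x * (|(z - x) i| * |(z - x) j|)
        ≤ p x * expw σ z x * (‖z - x‖ * ‖z - x‖) := by
          apply mul_le_mul_of_nonneg_left _ hpe
          exact mul_le_mul (abs_coord_le_norm _ i) (abs_coord_le_norm _ j)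
            (abs_nonneg _) (norm_nonneg _)
      _ = p x * (‖z - x‖ ^ 2 * expw σ z x) := by ring
      _ ≤ p x * (2 * σ ^ 2) :=
          mul_le_mul_of_nonneg_left (sq_mul_expw_le hσ z x) (hnonneg x)
      _ = 2 * σ ^ 2 * p x := by ring

lemma g_pos (hσ : 0 < σ) (hmeas : Measurable p) (hnonneg : ∀ x, 0 ≤ p x)
    (hp : Integrable p) (hint : (∫ x : Euc d, p x) = 1) (z : Euc d) :
    0 < ∫ x : Euc d, p x * expw σ z x := by
  have hnn : ∀ x, 0 ≤ p x * expw σ z x :=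
    fun x => mul_nonneg (hnonneg x) (expw_pos z x).le
  have h0 : 0 ≤ ∫ x : Euc d, p x * expw σ z x := integral_nonneg hnn
  rcases h0.lt_or_eq with h | h
  · exact h
  · exfalso
    have hz := (integral_eq_zero_iff_of_nonneg hnn (int_pE hσ hmeas hnonneg hp z)).1 h.symm
    have hpz : p =ᶠ[ae (volume : Measure (Euc d))] 0 := by
      filter_upwards [hz] with x hx
      have := expw_pos (σ := σ) z x
      simpa using (mul_eq_zero.1 hx).resolve_right (ne_of_gt this)
    have : (∫ x : Euc d, p x) = 0 := by
      rw [integral_congr_ae hpz]; simp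
    rw [hint] at this; exact one_ne_zero this

end Integr

section Derivs

open TweedieAux

variable {d : ℕ} {σ : ℝ} {p : Euc d → ℝ}

/-- The derivative (in `z`) of the Gaussian weight. -/
lemma hasFDerivAt_expw (hσ : 0 < σ) (x z : Euc d) :
    HasFDerivAt (fun y : Euc d => expw σ y x)
      ((-(σ ^ 2)⁻¹ * expw σ z x) • innerSL ℝ (z - x)) z := by
  have h1 : HasFDerivAt (fun y : Euc d => y - x)
      (ContinuousLinearMap.id ℝ (Euc d)) z := by
    simpa using (hasFDerivAt_id z).sub_const x
  have h2 := h1.norm_sq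
  have h3 := h2.const_mul (-(2 * σ ^ 2)⁻¹)
  have h4 := h3.exp
  have hfun : (fun y : Euc d => expw σ y x) =
      fun y : Euc d => Real.exp (-(2 * σ ^ 2)⁻¹ * ‖y - x‖ ^ 2) := by
    funext y; rw [expw]; ring_nf
  have hcoef : Real.exp (-(2 * σ ^ 2)⁻¹ * ‖z - x‖ ^ 2) = expw σ z x := by
    rw [expw]; ring_nf
  have hT : Real.exp (-(2 * σ ^ 2)⁻¹ * ‖z - x‖ ^ 2) •
      (-(2 * σ ^ 2)⁻¹ : ℝ) • ((2:ℕ) • ((innerSL ℝ) (z - x)).comp (ContinuousLinearMap.id ℝ (Euc d)))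
      = (-(σ ^ 2)⁻¹ * expw σ z x) • innerSL ℝ (z - x) := by
    have hσ2 : (σ:ℝ) ^ 2 ≠ 0 := by positivity
    ext v
    simp only [ContinuousLinearMap.smul_apply, smul_eq_mul, ContinuousLinearMap.coe_smul',
      Pi.smul_apply, ContinuousLinearMap.coe_comp', Function.comp_apply,
      ContinuousLinearMap.coe_id', id_eq, hcoef]
    rw [two_smul]
    field_simp
    ring
  rw [hfun]
  exact hT ▸ h4

/-- First-layer derivative integrand. -/
def D1 (p : Euc d → ℝ) (σ : ℝ) (z x : Euc d) : Euc d →L[ℝ] ℝ :=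
  (-(σ ^ 2)⁻¹ * (p x * expw σ z x)) • innerSL ℝ (z - x)

lemma hasFDerivAt_pE (hσ : 0 < σ) (x z : Euc d) :
    HasFDerivAt (fun y : Euc d => p x * expw σ y x) (D1 p σ z x) z := by
  have := (hasFDerivAt_expw hσ x z).const_mul (p x)
  have hD : D1 p σ z x = p x • ((-(σ ^ 2)⁻¹ * expw σ z x) • innerSL ℝ (z - x)) := by
    rw [D1, smul_smul]
    ring_nf
  rw [hD]; exact this

lemma norm_D1_le (hσ : 0 < σ) (hnonneg : ∀ x, 0 ≤ p x) (z x : Euc d) :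
    ‖D1 p σ z x‖ ≤ (σ ^ 2)⁻¹ * ((1 + 2 * σ ^ 2) / 2) * p x := by
  rw [D1]
  refine (ContinuousLinearMap.opNorm_smul_le _ _).trans ?_
  rw [innerSL_apply_norm, Real.norm_eq_abs, abs_mul, abs_neg, abs_inv,
    abs_of_nonneg (by positivity : (0:ℝ) ≤ σ ^ 2),
    abs_of_nonneg (mul_nonneg (hnonneg x) (expw_pos z x).le)]
  calc (σ ^ 2)⁻¹ * (p x * expw σ z x) * ‖z - x‖
      = (σ ^ 2)⁻¹ * p x * (‖z - x‖ * expw σ z x) := by ring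
    _ ≤ (σ ^ 2)⁻¹ * p x * ((1 + 2 * σ ^ 2) / 2) := by
        exact mul_le_mul_of_nonneg_left (norm_mul_expw_le hσ z x)
          (mul_nonneg (by positivity) (hnonneg x))
    _ = (σ ^ 2)⁻¹ * ((1 + 2 * σ ^ 2) / 2) * p x := by ring

lemma D1_meas (hmeas : Measurable p) (z : Euc d) :
    AEStronglyMeasurable (fun x => D1 p σ z x) (volume : Measure (Euc d)) := by
  unfold D1
  have h1 : Measurable fun x : Euc d => -(σ ^ 2)⁻¹ * (p x * expw σ z x) :=
    (hmeas.mul (continuous_expw (σ := σ) z).measurable).const_mul _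
  exact h1.aestronglyMeasurable.smul (Continuous.aestronglyMeasurable (by fun_prop))

lemma D1_int (hσ : 0 < σ) (hmeas : Measurable p) (hnonneg : ∀ x, 0 ≤ p x)
    (hp : Integrable p) (z : Euc d) :
    Integrable (fun x => D1 p σ z x) := by
  refine (hp.const_mul ((σ ^ 2)⁻¹ * ((1 + 2 * σ ^ 2) / 2))).mono' (D1_meas hmeas z) ?_
  filter_upwards with x
  exact norm_D1_le hσ hnonneg z x

/-- Differentiation under the integral sign, first layer. -/
lemma hasFDerivAt_g (hσ : 0 < σ) (hmeas : Measurable p) (hnonneg : ∀ x, 0 ≤ p x)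
    (hp : Integrable p) (z : Euc d) :
    HasFDerivAt (fun y : Euc d => ∫ x : Euc d, p x * expw σ y x)
      (∫ x : Euc d, D1 p σ z x) z := by
  apply hasFDerivAt_integral_of_dominated_of_fderiv_le
    (F' := fun y x => D1 p σ y x)
    (bound := fun x => (σ ^ 2)⁻¹ * ((1 + 2 * σ ^ 2) / 2) * p x)
    (s := Metric.ball z 1) (Metric.ball_mem_nhds z one_pos)
  · filter_upwards with y
    exact meas_pE hmeas y
  · exact int_pE hσ hmeas hnonneg hp z
  · exact D1_meas hmeas z
  · filter_upwards with x y _hy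
    exact norm_D1_le hσ hnonneg y x
  · exact (hp.const_mul _)
  · filter_upwards with x y _hy
    exact hasFDerivAt_pE hσ x y

lemma integral_D1_apply (hσ : 0 < σ) (hmeas : Measurable p) (hnonneg : ∀ x, 0 ≤ p x)
    (hp : Integrable p) (z : Euc d) (j : Fin d) :
    (∫ x : Euc d, D1 p σ z x) (EuclideanSpace.single j 1) =
      -(σ ^ 2)⁻¹ * ∫ x : Euc d, p x * expw σ z x * (z - x) j := by
  rw [ContinuousLinearMap.integral_apply (D1_int hσ hmeas hnonneg hp z), ← integral_const_mul]
  congr 1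
  funext x
  rw [D1]
  simp only [ContinuousLinearMap.smul_apply, smul_eq_mul, innerSL_apply_apply]
  rw [EuclideanSpace.inner_single_right]
  simp only [starRingEnd_apply, star_trivial, one_mul]
  ring

end Derivs

section Derivs2

open TweedieAux

variable {d : ℕ} {σ : ℝ} {p : Euc d → ℝ}

lemma norm_proj_le (j : Fin d) : ‖(EuclideanSpace.proj j : Euc d →L[ℝ] ℝ)‖ ≤ 1 := by
  apply ContinuousLinearMap.opNorm_le_bound _ zero_le_one
  intro v
  rw [one_mul]
  simpa [Real.norm_eq_abs] using abs_coord_le_norm v j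

lemma hasFDerivAt_coord (x z : Euc d) (j : Fin d) :
    HasFDerivAt (fun y : Euc d => (y - x) j)
      (EuclideanSpace.proj j : Euc d →L[ℝ] ℝ) z := by
  have h1 : HasFDerivAt (fun y : Euc d => y - x)
      (ContinuousLinearMap.id ℝ (Euc d)) z := by
    simpa using (hasFDerivAt_id z).sub_const x
  have h2 := (EuclideanSpace.proj j : Euc d →L[ℝ] ℝ).hasFDerivAt.comp z h1
  simpa [Function.comp_def] using h2

/-- Second-layer derivative integrand. -/
def D2 (p : Euc d → ℝ) (σ : ℝ) (j : Fin d) (z x : Euc d) : Euc d →L[ℝ] ℝ :=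
  (p x * expw σ z x) • (EuclideanSpace.proj j : Euc d →L[ℝ] ℝ) +
    ((z - x) j) • D1 p σ z x

lemma hasFDerivAt_pE_coord (hσ : 0 < σ) (x z : Euc d) (j : Fin d) :
    HasFDerivAt (fun y : Euc d => p x * expw σ y x * (y - x) j) (D2 p σ j z x) z := by
  have h := (hasFDerivAt_pE (p := p) hσ x z).mul (hasFDerivAt_coord x z j)
  exact h

lemma norm_D2_le (hσ : 0 < σ) (hnonneg : ∀ x, 0 ≤ p x) (z x : Euc d) (j : Fin d) :
    ‖D2 p σ j z x‖ ≤ 3 * p x := by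
  have hpe : 0 ≤ p x * expw σ z x := mul_nonneg (hnonneg x) (expw_pos z x).le
  rw [D2]
  refine (norm_add_le _ _).trans ?_
  have h1 : ‖(p x * expw σ z x) • (EuclideanSpace.proj j : Euc d →L[ℝ] ℝ)‖ ≤ p x := by
    refine (ContinuousLinearMap.opNorm_smul_le _ _).trans ?_
    rw [Real.norm_eq_abs, abs_of_nonneg hpe]
    calc p x * expw σ z x * ‖(EuclideanSpace.proj j : Euc d →L[ℝ] ℝ)‖
        ≤ p x * expw σ z x * 1 := mul_le_mul_of_nonneg_left (norm_proj_le j) hpe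
      _ = p x * expw σ z x := mul_one _
      _ ≤ p x * 1 := mul_le_mul_of_nonneg_left (expw_le_one hσ z x) (hnonneg x)
      _ = p x := mul_one _
  have h2 : ‖((z - x) j) • D1 p σ z x‖ ≤ 2 * p x := by
    refine (ContinuousLinearMap.opNorm_smul_le _ _).trans ?_
    rw [D1]
    refine (mul_le_mul_of_nonneg_left (ContinuousLinearMap.opNorm_smul_le _ _)
      (norm_nonneg _)).trans ?_
    rw [innerSL_apply_norm, Real.norm_eq_abs, Real.norm_eq_abs, abs_mul, abs_neg, abs_inv,
      abs_of_nonneg (by positivity : (0:ℝ) ≤ σ ^ 2), abs_of_nonneg hpe]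
    calc |(z - x) j| * ((σ ^ 2)⁻¹ * (p x * expw σ z x) * ‖z - x‖)
        ≤ ‖z - x‖ * ((σ ^ 2)⁻¹ * (p x * expw σ z x) * ‖z - x‖) := by
          apply mul_le_mul_of_nonneg_right (abs_coord_le_norm _ j)
          positivity
      _ = (σ ^ 2)⁻¹ * p x * (‖z - x‖ ^ 2 * expw σ z x) := by ring
      _ ≤ (σ ^ 2)⁻¹ * p x * (2 * σ ^ 2) :=
          mul_le_mul_of_nonneg_left (sq_mul_expw_le hσ z x)
            (mul_nonneg (by positivity) (hnonneg x))
      _ = 2 * p x := by field_simp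
  linarith

lemma D2_meas (hmeas : Measurable p) (z : Euc d) (j : Fin d) :
    AEStronglyMeasurable (fun x => D2 p σ j z x) (volume : Measure (Euc d)) := by
  unfold D2
  apply AEStronglyMeasurable.add
  · exact ((hmeas.mul (continuous_expw (σ := σ) z).measurable)).aestronglyMeasurable.smul
      aestronglyMeasurable_const
  · exact (Continuous.aestronglyMeasurable (by fun_prop : Continuous fun x : Euc d => (z - x) j)).smul (D1_meas hmeas z)

lemma D2_int (hσ : 0 < σ) (hmeas : Measurable p) (hnonneg : ∀ x, 0 ≤ p x)
    (hp : Integrable p) (z : Euc d) (j : Fin d) :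
    Integrable (fun x => D2 p σ j z x) := by
  refine (hp.const_mul 3).mono' (D2_meas hmeas z j) ?_
  filter_upwards with x
  simpa [mul_comm] using norm_D2_le hσ hnonneg z x j

/-- Differentiation under the integral sign, second layer. -/
lemma hasFDerivAt_G (hσ : 0 < σ) (hmeas : Measurable p) (hnonneg : ∀ x, 0 ≤ p x)
    (hp : Integrable p) (z : Euc d) (j : Fin d) :
    HasFDerivAt (fun y : Euc d => ∫ x : Euc d, p x * expw σ y x * (y - x) j)
      (∫ x : Euc d, D2 p σ j z x) z := by
  apply hasFDerivAt_integral_of_dominated_of_fderiv_le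
    (F' := fun y x => D2 p σ j y x)
    (bound := fun x => 3 * p x) (s := Metric.ball z 1) (Metric.ball_mem_nhds z one_pos)
  · filter_upwards with y
    exact (meas_pE hmeas y).mul (Continuous.aestronglyMeasurable (by fun_prop))
  · exact int_pE_coord hσ hmeas hnonneg hp z j
  · exact D2_meas hmeas z j
  · filter_upwards with x y _hy
    exact norm_D2_le hσ hnonneg y x j
  · exact hp.const_mul 3
  · filter_upwards with x y _hy
    exact hasFDerivAt_pE_coord hσ x y j

lemma integral_D2_apply (hσ : 0 < σ) (hmeas : Measurable p) (hnonneg : ∀ x, 0 ≤ p x)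
    (hp : Integrable p) (z : Euc d) (i j : Fin d) :
    (∫ x : Euc d, D2 p σ j z x) (EuclideanSpace.single i 1) =
      (if i = j then 1 else 0) * (∫ x : Euc d, p x * expw σ z x) +
      -(σ ^ 2)⁻¹ * ∫ x : Euc d, p x * expw σ z x * ((z - x) i * (z - x) j) := by
  rw [ContinuousLinearMap.integral_apply (D2_int hσ hmeas hnonneg hp z j)]
  have hptw : ∀ x : Euc d, (D2 p σ j z x) (EuclideanSpace.single i 1) =
      (if i = j then 1 else 0) * (p x * expw σ z x) +
      -(σ ^ 2)⁻¹ * (p x * expw σ z x * ((z - x) i * (z - x) j)) := by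
    intro x
    rw [D2, D1]
    simp only [ContinuousLinearMap.add_apply, ContinuousLinearMap.smul_apply, smul_eq_mul,
      PiLp.proj_apply, EuclideanSpace.single_apply, innerSL_apply_apply]
    rw [EuclideanSpace.inner_single_right]
    simp only [starRingEnd_apply, star_trivial, one_mul]
    by_cases h : i = j
    · simp only [h, if_pos rfl]
      ring
    · simp only [if_neg h, if_neg (Ne.symm h)]
      ring
  rw [integral_congr_ae (Filter.EventuallyEq.of_eq (funext hptw))]
  rw [integral_add]
  · rw [integral_const_mul, integral_const_mul]
  · exact (int_pE hσ hmeas hnonneg hp z).const_mul _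
  · exact (int_pE_coord2 hσ hmeas hnonneg hp z i j).const_mul _

end Derivs2

section LogDeriv

open TweedieAux

variable {d : ℕ} {σ : ℝ} {p : Euc d → ℝ}

lemma smoothed_eq (z : Euc d) :
    smoothed d p σ z =
      (2 * π * σ ^ 2) ^ (-(d : ℝ) / 2) * ∫ x : Euc d, p x * expw σ z x := rfl

lemma const_pos (hσ : 0 < σ) : (0:ℝ) < (2 * π * σ ^ 2) ^ (-(d : ℝ) / 2) :=
  Real.rpow_pos_of_pos (by positivity) _

lemma smoothed_pos (hσ : 0 < σ) (hmeas : Measurable p) (hnonneg : ∀ x, 0 ≤ p x)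
    (hp : Integrable p) (hint : (∫ x : Euc d, p x) = 1) (z : Euc d) :
    0 < smoothed d p σ z := by
  rw [smoothed_eq]
  exact mul_pos (const_pos hσ) (g_pos hσ hmeas hnonneg hp hint z)

lemma hasFDerivAt_logsmoothed (hσ : 0 < σ) (hmeas : Measurable p) (hnonneg : ∀ x, 0 ≤ p x)
    (hp : Integrable p) (hint : (∫ x : Euc d, p x) = 1) (z : Euc d) :
    HasFDerivAt (fun w => Real.log (smoothed d p σ w))
      ((∫ x : Euc d, p x * expw σ z x)⁻¹ • ∫ x : Euc d, D1 p σ z x) z := by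
  have hg := hasFDerivAt_g hσ hmeas hnonneg hp z
  have hgpos := g_pos hσ hmeas hnonneg hp hint z
  have hc := const_pos (d := d) hσ
  set c : ℝ := (2 * π * σ ^ 2) ^ (-(d : ℝ) / 2) with hcdef
  have hsm : HasFDerivAt (smoothed d p σ) (c • ∫ x : Euc d, D1 p σ z x) z := by
    have h := hg.const_mul c
    exact h
  have hne : smoothed d p σ z ≠ 0 := (smoothed_pos hσ hmeas hnonneg hp hint z).ne'
  have hlog := hsm.log hne
  have hD : (∫ x : Euc d, p x * expw σ z x)⁻¹ • (∫ x : Euc d, D1 p σ z x) =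
      (smoothed d p σ z)⁻¹ • c • ∫ x : Euc d, D1 p σ z x := by
    rw [smoothed_eq, smul_smul]
    congr 1
    field_simp
    rw [hcdef, neg_div]
  rw [hD]; exact hlog

lemma fderiv_log_apply (hσ : 0 < σ) (hmeas : Measurable p) (hnonneg : ∀ x, 0 ≤ p x)
    (hp : Integrable p) (hint : (∫ x : Euc d, p x) = 1) (z : Euc d) (j : Fin d) :
    fderiv ℝ (fun w => Real.log (smoothed d p σ w)) z (EuclideanSpace.single j 1) =
      -(σ ^ 2)⁻¹ * ((∫ x : Euc d, p x * expw σ z x)⁻¹ *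
        ∫ x : Euc d, p x * expw σ z x * (z - x) j) := by
  rw [(hasFDerivAt_logsmoothed hσ hmeas hnonneg hp hint z).fderiv]
  rw [ContinuousLinearMap.smul_apply, integral_D1_apply hσ hmeas hnonneg hp z j]
  rw [smul_eq_mul]
  ring

lemma hess_entry (hσ : 0 < σ) (hmeas : Measurable p) (hnonneg : ∀ x, 0 ≤ p x)
    (hp : Integrable p) (hint : (∫ x : Euc d, p x) = 1) (z : Euc d) (i j : Fin d) :
    hessMat d (fun w => Real.log (smoothed d p σ w)) z i j =
      -(σ ^ 2)⁻¹ *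
        ((∫ x : Euc d, p x * expw σ z x)⁻¹ *
            ((if i = j then 1 else 0) * (∫ x : Euc d, p x * expw σ z x) +
              -(σ ^ 2)⁻¹ * ∫ x : Euc d, p x * expw σ z x * ((z - x) i * (z - x) j)) +
          (∫ x : Euc d, p x * expw σ z x * (z - x) j) *
            (-(((∫ x : Euc d, p x * expw σ z x) ^ 2)⁻¹) *
              (-(σ ^ 2)⁻¹ * ∫ x : Euc d, p x * expw σ z x * (z - x) i))) := by
  have hgpos := g_pos hσ hmeas hnonneg hp hint z
  have hfun : (fun y => fderiv ℝ (fun w => Real.log (smoothed d p σ w)) y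
      (EuclideanSpace.single j 1)) =
      fun y => -(σ ^ 2)⁻¹ * ((∫ x : Euc d, p x * expw σ y x)⁻¹ *
        ∫ x : Euc d, p x * expw σ y x * (y - x) j) := by
    funext y
    exact fderiv_log_apply hσ hmeas hnonneg hp hint y j
  have hinv : HasFDerivAt (fun y : Euc d => (∫ x : Euc d, p x * expw σ y x)⁻¹)
      ((-(((∫ x : Euc d, p x * expw σ z x) ^ 2)⁻¹)) • ∫ x : Euc d, D1 p σ z x) z := by
    have h := (hasDerivAt_inv hgpos.ne').comp_hasFDerivAt z
      (hasFDerivAt_g hσ hmeas hnonneg hp z)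
    exact h
  have hmul := hinv.mul (hasFDerivAt_G hσ hmeas hnonneg hp z j)
  have hfin := hmul.const_mul (-(σ ^ 2)⁻¹)
  simp only [Pi.mul_apply] at hfin
  rw [hessMat, Matrix.of_apply, hfun, hfin.fderiv]
  simp only [ContinuousLinearMap.smul_apply, ContinuousLinearMap.add_apply, smul_eq_mul]
  rw [integral_D1_apply hσ hmeas hnonneg hp z i, integral_D2_apply hσ hmeas hnonneg hp z i j]

end LogDeriv

section PSD

open TweedieAux

variable {d : ℕ} {σ : ℝ} {p : Euc d → ℝ}

lemma postMean_coord (hσ : 0 < σ) (hmeas : Measurable p) (hnonneg : ∀ x, 0 ≤ p x)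
    (hp : Integrable p) (z : Euc d) (i : Fin d) :
    postMean d p σ z i =
      (∫ x : Euc d, p x * expw σ z x)⁻¹ * ∫ x : Euc d, p x * expw σ z x * (z - x) i := by
  rw [postMean, PiLp.smul_apply, smul_eq_mul]
  congr 1
  have h2 := (EuclideanSpace.proj (𝕜 := ℝ) i).integral_comp_comm
    (int_pE_vec hσ hmeas hnonneg hp z)
  simp only [PiLp.proj_apply, PiLp.smul_apply, smul_eq_mul] at h2
  exact h2.symm

lemma postCov_entry (hσ : 0 < σ) (hmeas : Measurable p) (hnonneg : ∀ x, 0 ≤ p x)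
    (hp : Integrable p) (z : Euc d) (i j : Fin d) :
    postCov d p σ z i j =
      (∫ x : Euc d, p x * expw σ z x)⁻¹ *
        (∫ x : Euc d, p x * expw σ z x * ((z - x) i * (z - x) j)) -
      ((∫ x : Euc d, p x * expw σ z x)⁻¹ * ∫ x : Euc d, p x * expw σ z x * (z - x) i) *
      ((∫ x : Euc d, p x * expw σ z x)⁻¹ * ∫ x : Euc d, p x * expw σ z x * (z - x) j) := by
  rw [postCov, Matrix.of_apply,
    postMean_coord hσ hmeas hnonneg hp z i, postMean_coord hσ hmeas hnonneg hp z j]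
  rfl

/-- The Cauchy–Schwarz-type inequality needed for positive semidefiniteness. -/
lemma key_ineq (hσ : 0 < σ) (hmeas : Measurable p) (hnonneg : ∀ x, 0 ≤ p x)
    (hp : Integrable p) (hint : (∫ x : Euc d, p x) = 1) (z : Euc d) (v : Fin d → ℝ) :
    (∫ x : Euc d, p x * expw σ z x * (∑ k, v k * (z - x) k)) ^ 2 ≤
      (∫ x : Euc d, p x * expw σ z x) *
        ∫ x : Euc d, p x * expw σ z x * (∑ k, v k * (z - x) k) ^ 2 := by
  set q : Euc d → ℝ := fun x => ∑ k, v k * (z - x) k with hq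
  have hI0 := int_pE hσ hmeas hnonneg hp z
  have hIq : Integrable (fun x => p x * expw σ z x * q x) := by
    have he : (fun x => p x * expw σ z x * q x) =
        fun x => ∑ k, v k * (p x * expw σ z x * (z - x) k) := by
      funext x
      rw [hq, Finset.mul_sum]
      congr 1; funext k; ring
    rw [he]
    exact integrable_finset_sum _ fun k _ =>
      (int_pE_coord hσ hmeas hnonneg hp z k).const_mul (v k)
  have hIq2 : Integrable (fun x => p x * expw σ z x * q x ^ 2) := by
    have he : (fun x => p x * expw σ z x * q x ^ 2) =
        fun x => ∑ k, ∑ l, (v k * v l) * (p x * expw σ z x * ((z - x) k * (z - x) l)) := by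
      funext x
      rw [hq, sq, Finset.sum_mul_sum, Finset.mul_sum]
      · congr 1; funext k
        rw [Finset.mul_sum]
        congr 1; funext l; ring
    rw [he]
    exact integrable_finset_sum _ fun k _ => integrable_finset_sum _ fun l _ =>
      (int_pE_coord2 hσ hmeas hnonneg hp z k l).const_mul _
  set g : ℝ := ∫ x : Euc d, p x * expw σ z x with hg
  have hgpos : 0 < g := g_pos hσ hmeas hnonneg hp hint z
  set T : ℝ := ∫ x : Euc d, p x * expw σ z x * q x with hT
  set t : ℝ := T / g with ht
  have hnn : 0 ≤ ∫ x : Euc d, p x * expw σ z x * (q x - t) ^ 2 :=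
    integral_nonneg fun x => mul_nonneg (mul_nonneg (hnonneg x) (expw_pos z x).le) (sq_nonneg _)
  have hexpand : (∫ x : Euc d, p x * expw σ z x * (q x - t) ^ 2) =
      (∫ x : Euc d, p x * expw σ z x * q x ^ 2) - 2 * t * T + t ^ 2 * g := by
    have hfun : (fun x => p x * expw σ z x * (q x - t) ^ 2) =
        fun x => (p x * expw σ z x * q x ^ 2) +
          ((-(2 * t)) * (p x * expw σ z x * q x) + t ^ 2 * (p x * expw σ z x)) := by
      funext x; ring
    have h2 : Integrable (fun x =>
        -(2 * t) * (p x * expw σ z x * q x) + t ^ 2 * (p x * expw σ z x)) :=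
      (hIq.const_mul _).add (hI0.const_mul _)
    rw [hfun, integral_add hIq2 h2,
      integral_add (hIq.const_mul _) (hI0.const_mul _),
      integral_const_mul, integral_const_mul]
    rw [← hT, ← hg]
    ring
  rw [hexpand] at hnn
  have ht2 : t * g = T := by rw [ht]; field_simp
  nlinarith [hnn, hgpos]

lemma postCov_posSemidef (hσ : 0 < σ) (hmeas : Measurable p) (hnonneg : ∀ x, 0 ≤ p x)
    (hp : Integrable p) (hint : (∫ x : Euc d, p x) = 1) (z : Euc d) :
    (postCov d p σ z).PosSemidef := by
  have hgpos : 0 < ∫ x : Euc d, p x * expw σ z x := g_pos hσ hmeas hnonneg hp hint z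
  rw [Matrix.posSemidef_iff_dotProduct_mulVec]
  constructor
  · -- Hermitian
    rw [Matrix.IsHermitian]
    ext i j
    rw [Matrix.conjTranspose_apply, postCov_entry hσ hmeas hnonneg hp z i j,
      postCov_entry hσ hmeas hnonneg hp z j i]
    have hsym : (∫ x : Euc d, p x * expw σ z x * ((z - x) j * (z - x) i)) =
        ∫ x : Euc d, p x * expw σ z x * ((z - x) i * (z - x) j) := by
      congr 1; funext x; ring
    rw [star_trivial, hsym]
    ring
  · intro v
    set g : ℝ := ∫ x : Euc d, p x * expw σ z x with hg
    set W : Fin d → ℝ := fun i => ∫ x : Euc d, p x * expw σ z x * (z - x) i with hW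
    set S : Fin d → Fin d → ℝ :=
      fun i j => ∫ x : Euc d, p x * expw σ z x * ((z - x) i * (z - x) j) with hS
    set q : Euc d → ℝ := fun x => ∑ k, v k * (z - x) k with hq
    have hqd : dotProduct (star v) ((postCov d p σ z).mulVec v) =
        ∑ i, ∑ j, v i * v j * postCov d p σ z i j := by
      simp only [dotProduct, Matrix.mulVec, Pi.star_apply, star_trivial, Finset.mul_sum]
      refine Finset.sum_congr rfl fun i _ => ?_
      refine Finset.sum_congr rfl fun j _ => ?_
      ring
    have hQ : (∑ i, ∑ j, v i * v j * S i j) =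
        ∫ x : Euc d, p x * expw σ z x * q x ^ 2 := by
      have he : (fun x => p x * expw σ z x * q x ^ 2) =
          fun x => ∑ k, ∑ l, (v k * v l) * (p x * expw σ z x * ((z - x) k * (z - x) l)) := by
        funext x
        rw [hq, sq, Finset.sum_mul_sum, Finset.mul_sum]
        congr 1; funext k
        rw [Finset.mul_sum]
        congr 1; funext l; ring
      rw [he, integral_finset_sum _ fun k _ => integrable_finset_sum _ fun l _ =>
        (int_pE_coord2 hσ hmeas hnonneg hp z k l).const_mul _]
      refine Finset.sum_congr rfl fun i _ => ?_
      rw [integral_finset_sum _ fun l _ =>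
        (int_pE_coord2 hσ hmeas hnonneg hp z i l).const_mul _]
      refine Finset.sum_congr rfl fun j _ => ?_
      rw [integral_const_mul]
    have hTs : (∑ i, v i * W i) = ∫ x : Euc d, p x * expw σ z x * q x := by
      have he : (fun x => p x * expw σ z x * q x) =
          fun x => ∑ k, v k * (p x * expw σ z x * (z - x) k) := by
        funext x
        rw [hq, Finset.mul_sum]
        congr 1; funext k; ring
      rw [he, integral_finset_sum _ fun k _ =>
        (int_pE_coord hσ hmeas hnonneg hp z k).const_mul (v k)]
      refine Finset.sum_congr rfl fun i _ => ?_
      rw [integral_const_mul]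
    have hsum : (∑ i, ∑ j, v i * v j * postCov d p σ z i j) =
        g⁻¹ * (∑ i, ∑ j, v i * v j * S i j) - (g⁻¹ * ∑ i, v i * W i) ^ 2 := by
      have he : ∀ i j, v i * v j * postCov d p σ z i j =
          g⁻¹ * (v i * v j * S i j) - (v i * (g⁻¹ * W i)) * (v j * (g⁻¹ * W j)) := by
        intro i j
        rw [postCov_entry hσ hmeas hnonneg hp z i j]
        ring
      calc (∑ i, ∑ j, v i * v j * postCov d p σ z i j)
          = ∑ i, ∑ j, (g⁻¹ * (v i * v j * S i j) -
              (v i * (g⁻¹ * W i)) * (v j * (g⁻¹ * W j))) := by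
            refine Finset.sum_congr rfl fun i _ => ?_
            refine Finset.sum_congr rfl fun j _ => ?_
            exact he i j
        _ = (∑ i, ∑ j, g⁻¹ * (v i * v j * S i j)) -
              ∑ i, ∑ j, (v i * (g⁻¹ * W i)) * (v j * (g⁻¹ * W j)) := by
            rw [← Finset.sum_sub_distrib]
            refine Finset.sum_congr rfl fun i _ => ?_
            rw [← Finset.sum_sub_distrib]
        _ = g⁻¹ * (∑ i, ∑ j, v i * v j * S i j) - (g⁻¹ * ∑ i, v i * W i) ^ 2 := by
            rw [← Finset.sum_mul_sum]
            have h1 : (∑ i, ∑ j, g⁻¹ * (v i * v j * S i j)) =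
                g⁻¹ * ∑ i, ∑ j, v i * v j * S i j := by
              rw [Finset.mul_sum]
              refine Finset.sum_congr rfl fun i _ => ?_
              rw [Finset.mul_sum]
            have h2 : (∑ i, v i * (g⁻¹ * W i)) = g⁻¹ * ∑ i, v i * W i := by
              rw [Finset.mul_sum]
              refine Finset.sum_congr rfl fun i _ => ?_
              ring
            rw [h1, h2]
            ring
    have hkey := key_ineq hσ hmeas hnonneg hp hint z v
    rw [hqd, hsum, hQ, hTs]
    set Q : ℝ := ∫ x : Euc d, p x * expw σ z x * q x ^ 2 with hQd
    set T : ℝ := ∫ x : Euc d, p x * expw σ z x * q x with hTd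
    have hid : g⁻¹ * Q - (g⁻¹ * T) ^ 2 = g⁻¹ * g⁻¹ * (g * Q - T ^ 2) := by
      field_simp
    rw [hid]
    apply mul_nonneg (by positivity)
    rw [sub_nonneg]
    exact hkey

end PSD

open TweedieAux

lemma smul_posSemidef {n : ℕ} {c : ℝ} (hc : 0 ≤ c) {M : Matrix (Fin n) (Fin n) ℝ}
    (hM : M.PosSemidef) : (c • M).PosSemidef := by
  rw [Matrix.posSemidef_iff_dotProduct_mulVec]
  constructor
  · rw [Matrix.IsHermitian, Matrix.conjTranspose_smul, star_trivial, hM.1]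
  · intro x
    rw [Matrix.smul_mulVec, dotProduct_smul, smul_eq_mul]
    exact mul_nonneg hc ((Matrix.posSemidef_iff_dotProduct_mulVec.1 hM).2 x)



/-- **Second-order Tweedie identity**:
`−∇² ln p_σ(z) = (1/σ²)(I_d − (1/σ²) C_σ(z))`; in particular, since the posterior covariance
`C_σ(z)` is positive semidefinite, `−∇² ln p_σ(z) ⪯ (1/σ²) I_d`. -/
theorem second_order_tweedie
    (d : ℕ) (p : Euc d → ℝ)
    (hmeas : Measurable p) (hnonneg : ∀ x, 0 ≤ p x)
    (hint : (∫ x : Euc d, p x) = 1)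
    (σ : ℝ) (hσ : 0 < σ) :
    ∀ z : Euc d,
      -(hessMat d (fun w => Real.log (smoothed d p σ w)) z) =
        (σ ^ 2)⁻¹ • ((1 : Matrix (Fin d) (Fin d) ℝ) - (σ ^ 2)⁻¹ • postCov d p σ z) ∧
      (postCov d p σ z).PosSemidef ∧
      ((σ ^ 2)⁻¹ • (1 : Matrix (Fin d) (Fin d) ℝ) -
        -(hessMat d (fun w => Real.log (smoothed d p σ w)) z)).PosSemidef := by
  have hp : Integrable p (volume : Measure (Euc d)) := by
    by_contra h
    rw [integral_undef h] at hint
    exact one_ne_zero hint.symm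
  intro z
  have hgpos := g_pos hσ hmeas hnonneg hp hint z
  have heq1 : -(hessMat d (fun w => Real.log (smoothed d p σ w)) z) =
      (σ ^ 2)⁻¹ • ((1 : Matrix (Fin d) (Fin d) ℝ) - (σ ^ 2)⁻¹ • postCov d p σ z) := by
    ext i j
    rw [Matrix.neg_apply, hess_entry hσ hmeas hnonneg hp hint z i j,
      Matrix.smul_apply, Matrix.sub_apply, Matrix.smul_apply, Matrix.one_apply,
      postCov_entry hσ hmeas hnonneg hp z i j, smul_eq_mul, smul_eq_mul]
    have hσ2 : (σ:ℝ) ^ 2 ≠ 0 := by positivity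
    have hgne : (∫ x : Euc d, p x * expw σ z x) ≠ 0 := hgpos.ne'
    by_cases h : i = j
    · simp only [if_pos h]
      field_simp
      ring
    · simp only [if_neg h]
      field_simp
      ring
  have hpsd := postCov_posSemidef hσ hmeas hnonneg hp hint z
  refine ⟨heq1, hpsd, ?_⟩
  rw [heq1]
  have heq2 : (σ ^ 2)⁻¹ • (1 : Matrix (Fin d) (Fin d) ℝ) -
      (σ ^ 2)⁻¹ • ((1 : Matrix (Fin d) (Fin d) ℝ) - (σ ^ 2)⁻¹ • postCov d p σ z) =
      (σ ^ 2)⁻¹ • ((σ ^ 2)⁻¹ • postCov d p σ z) := by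
    rw [smul_sub, sub_sub_cancel]
  rw [heq2]
  have hc : (0:ℝ) ≤ (σ ^ 2)⁻¹ := by positivity
  exact smul_posSemidef hc (smul_posSemidef hc hpsd)


end
end

section
/- Let p be a probability density on ℝ^d that is log-concave and strictly positive on ℝ^d. Fix y ∈ ℝ^d and τ > 0. For σ > 0 let x⋆_σ denote the unique minimiser of F_σ(x) = (1/2)‖y − x‖² − τ ln p_σ(x), and let x⋆ denote the unique minimiser of F(x) = (1/2)‖y − x‖² − τ ln p(x). Then x⋆_σ → x⋆ as σ → 0⁺. -/
open MeasureTheory Real Filter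

noncomputable section

/-- The smoothed proximal objective `F_σ(x) = (1/2)‖y − x‖² − τ ln p_σ(x)`. -/
def Fsig (d : ℕ) (p : Euc d → ℝ) (y : Euc d) (τ σ : ℝ) (x : Euc d) : ℝ :=
  (1 / 2) * ‖y - x‖ ^ 2 - τ * Real.log (smoothed d p σ x)

/-- The proximal objective `F(x) = (1/2)‖y − x‖² − τ ln p(x)`. -/
def Fobj (d : ℕ) (p : Euc d → ℝ) (y : Euc d) (τ : ℝ) (x : Euc d) : ℝ :=
  (1 / 2) * ‖y - x‖ ^ 2 - τ * Real.log (p x)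

namespace SmoothAux

open Metric

variable {d : ℕ}

/-- standard Gaussian weight -/
def w (d : ℕ) (u : Euc d) : ℝ := (2 * π) ^ (-(d:ℝ)/2) * rexp (-‖u‖^2 / 2)

lemma w_pos (u : Euc d) : 0 < w d u :=
  mul_pos (Real.rpow_pos_of_pos (by positivity) _) (Real.exp_pos _)

lemma w_continuous : Continuous (w d) := by
  apply Continuous.mul continuous_const
  exact Real.continuous_exp.comp (by fun_prop)

lemma integrable_gauss {b : ℝ} (hb : 0 < b) :
    Integrable (fun v : Euc d => rexp (-b * ‖v‖^2)) := by
  have := (GaussianFourier.integrable_cexp_neg_mul_sq_norm_add (V := Euc d)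
    (b := (b:ℂ)) (by simpa using hb) 0 0).norm
  refine this.congr ?_
  filter_upwards with v
  simp [Complex.norm_exp, ← Complex.ofReal_pow]

lemma integrable_w : Integrable (w d) := by
  refine ((integrable_gauss (d := d) (b := 1/2) (by norm_num)).const_mul
    ((2 * π) ^ (-(d:ℝ)/2))).congr ?_
  filter_upwards with v
  unfold w
  ring_nf

lemma integral_w : ∫ u : Euc d, w d u = 1 := by
  have h : ∫ u : Euc d, rexp (-(1/2) * ‖u‖^2) = (2*π)^((d:ℝ)/2) := by
    rw [GaussianFourier.integral_rexp_neg_mul_sq_norm (by norm_num : (0:ℝ) < 1/2),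
      finrank_euclideanSpace_fin, show π/(1/2:ℝ) = 2*π by ring]
  unfold w
  rw [integral_const_mul]
  have : ∀ u : Euc d, rexp (-‖u‖^2/2) = rexp (-(1/2) * ‖u‖^2) := by
    intro u; ring_nf
  simp_rw [this, h]
  rw [← Real.rpow_add (by positivity), show -(d:ℝ)/2 + (d:ℝ)/2 = 0 by ring, Real.rpow_zero]

lemma integrable_exp_mul_w (c : ℝ) :
    Integrable (fun u : Euc d => rexp (c * ‖u‖) * w d u) := by
  have h2π : (0:ℝ) < 2 * π := by positivity
  set A : ℝ := (2 * π) ^ (-(d:ℝ)/2) with hA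
  have hApos : 0 < A := Real.rpow_pos_of_pos h2π _
  refine Integrable.mono' (g := fun u => (A * rexp (c^2)) * rexp (-(1/4) * ‖u‖^2))
    ((integrable_gauss (by norm_num)).const_mul _) ?_ ?_
  · exact ((Real.continuous_exp.comp (by fun_prop)).mul w_continuous).aestronglyMeasurable
  · filter_upwards with u
    have hw : 0 < w d u := w_pos u
    have h1 : rexp (c * ‖u‖) * w d u = A * rexp (c * ‖u‖ + -‖u‖^2/2) := by
      rw [Real.exp_add]; unfold w; ring
    rw [Real.norm_eq_abs, abs_of_pos (by positivity), h1, mul_assoc, ← Real.exp_add]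
    apply mul_le_mul_of_nonneg_left _ hApos.le
    apply Real.exp_le_exp.2
    nlinarith [sq_nonneg (c - ‖u‖/2), sq_nonneg ‖u‖, norm_nonneg u]

lemma smoothed_rep (p : Euc d → ℝ) {σ : ℝ} (hσ : 0 < σ) (z : Euc d) :
    smoothed d p σ z = ∫ u : Euc d, p (z - σ • u) * w d u := by
  have h2π : (0:ℝ) < 2 * π := by positivity
  set A : ℝ := (2 * π) ^ (-(d:ℝ)/2) with hA
  -- step 1: rewrite RHS integrand
  have h1 : ∀ u : Euc d, p (z - σ • u) * w d u
      = A * (p (z - σ • u) * rexp (-‖σ • u‖^2 / (2 * σ^2))) := by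
    intro u
    have hn : ‖σ • u‖^2 = σ^2 * ‖u‖^2 := by
      rw [norm_smul, mul_pow, Real.norm_eq_abs, sq_abs]
    rw [hn]
    have : -(σ^2 * ‖u‖^2) / (2 * σ^2) = -‖u‖^2/2 := by
      field_simp
    rw [this]
    unfold w; ring
  rw [funext h1, integral_const_mul]
  -- step 2: scaling change of variables
  have h2 : (∫ u : Euc d, p (z - σ • u) * rexp (-‖σ • u‖^2 / (2 * σ^2)))
      = |((σ:ℝ) ^ (Module.finrank ℝ (Euc d)))⁻¹| •
        ∫ v : Euc d, p (z - v) * rexp (-‖v‖^2 / (2 * σ^2)) :=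
    MeasureTheory.Measure.integral_comp_smul volume
      (fun v => p (z - v) * rexp (-‖v‖^2 / (2 * σ^2))) σ
  rw [h2]
  -- step 3: translation change of variables
  have h3 : (∫ v : Euc d, p (z - v) * rexp (-‖v‖^2 / (2 * σ^2)))
      = ∫ x : Euc d, p x * rexp (-‖z - x‖^2 / (2 * σ^2)) := by
    have : ∀ v : Euc d, p (z - v) * rexp (-‖v‖^2 / (2 * σ^2))
        = (fun x => p x * rexp (-‖z - x‖^2 / (2 * σ^2))) (z - v) := by
      intro v; simp [sub_sub_cancel]
    rw [funext this]
    exact integral_sub_left_eq_self (E := ℝ) (fun x => p x * rexp (-‖z - x‖^2 / (2 * σ^2))) volume z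
  rw [h3]
  -- step 4: constants
  rw [smoothed, finrank_euclideanSpace_fin]
  have hconst : (2 * π * σ ^ 2) ^ (-(d : ℝ) / 2) = A * |((σ:ℝ) ^ d)⁻¹| := by
    rw [Real.mul_rpow (by positivity) (by positivity), hA]
    congr 1
    rw [abs_of_pos (by positivity)]
    rw [show ((σ:ℝ)^2) = σ ^ (2:ℝ) by rw [Real.rpow_two],
      ← Real.rpow_natCast σ d, ← Real.rpow_neg hσ.le,
      ← Real.rpow_mul hσ.le]
    congr 1
    ring
  rw [hconst, smul_eq_mul]
  ring

variable {p : Euc d → ℝ} {M : ℝ}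

lemma integrand_integrable (hmeas : Measurable p) (hM : ∀ x, p x ≤ M)
    (hnonneg : ∀ x, 0 ≤ p x) (σ : ℝ) (z : Euc d) :
    Integrable (fun u : Euc d => p (z - σ • u) * w d u) := by
  refine Integrable.mono' (integrable_w.const_mul M) ?_ ?_
  · exact ((hmeas.comp (measurable_const.sub (measurable_id.const_smul σ))).mul
      w_continuous.measurable).aestronglyMeasurable
  · filter_upwards with u
    rw [Real.norm_eq_abs, abs_of_nonneg (mul_nonneg (hnonneg _) (w_pos u).le)]
    exact mul_le_mul_of_nonneg_right (hM _) (w_pos u).le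

lemma smoothed_le (hmeas : Measurable p) (hM : ∀ x, p x ≤ M)
    (hnonneg : ∀ x, 0 ≤ p x) {σ : ℝ} (hσ : 0 < σ) (z : Euc d) :
    smoothed d p σ z ≤ M := by
  rw [smoothed_rep p hσ z]
  calc (∫ u : Euc d, p (z - σ • u) * w d u) ≤ ∫ u : Euc d, M * w d u := by
        refine integral_mono (integrand_integrable hmeas hM hnonneg σ z)
          (integrable_w.const_mul M) fun u => ?_
        exact mul_le_mul_of_nonneg_right (hM _) (w_pos u).le
    _ = M := by rw [integral_const_mul, integral_w, mul_one]

lemma smoothed_pos (hmeas : Measurable p) (hM : ∀ x, p x ≤ M)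
    (hnonneg : ∀ x, 0 ≤ p x) (hpos : ∀ x, 0 < p x) {σ : ℝ} (hσ : 0 < σ) (z : Euc d) :
    0 < smoothed d p σ z := by
  rw [smoothed_rep p hσ z]
  rw [integral_pos_iff_support_of_nonneg
    (fun u => (mul_pos (hpos _) (w_pos u)).le) (integrand_integrable hmeas hM hnonneg σ z)]
  have hsupp : (Function.support fun u : Euc d => p (z - σ • u) * w d u) = Set.univ :=
    Set.eq_univ_iff_forall.mpr fun u => (mul_pos (hpos _) (w_pos u)).ne'
  rw [hsupp]
  exact isOpen_univ.measure_pos volume Set.univ_nonempty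

lemma smoothed_tendsto (hmeas : Measurable p) (hM : ∀ x, p x ≤ M)
    (hnonneg : ∀ x, 0 ≤ p x) (hcont : Continuous p) (z : Euc d) :
    Tendsto (fun σ => smoothed d p σ z) (nhdsWithin (0:ℝ) (Set.Ioi 0)) (nhds (p z)) := by
  have key : Tendsto (fun σ => ∫ u : Euc d, p (z - σ • u) * w d u)
      (nhdsWithin (0:ℝ) (Set.Ioi 0)) (nhds (∫ u : Euc d, p z * w d u)) := by
    refine tendsto_integral_filter_of_dominated_convergence (fun u => M * w d u)
      ?_ ?_ (integrable_w.const_mul M) ?_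
    · filter_upwards with σ
      exact ((hmeas.comp (measurable_const.sub (measurable_id.const_smul σ))).mul
        w_continuous.measurable).aestronglyMeasurable
    · filter_upwards with σ
      filter_upwards with u
      rw [Real.norm_eq_abs, abs_of_nonneg (mul_nonneg (hnonneg _) (w_pos u).le)]
      exact mul_le_mul_of_nonneg_right (hM _) (w_pos u).le
    · filter_upwards with u
      have h1 : Tendsto (fun σ : ℝ => z - σ • u) (nhdsWithin (0:ℝ) (Set.Ioi 0)) (nhds z) := by
        have hc : Continuous (fun σ : ℝ => z - σ • u) := by fun_prop
        have := (hc.tendsto 0).mono_left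
          (nhdsWithin_le_nhds (s := Set.Ioi (0:ℝ)))
        simpa using this
      exact ((hcont.tendsto z).comp h1).mul tendsto_const_nhds
  have heq : ∫ u : Euc d, p z * w d u = p z := by rw [integral_const_mul, integral_w, mul_one]
  rw [heq] at key
  refine key.congr' ?_
  filter_upwards [self_mem_nhdsWithin] with σ (hσ : 0 < σ)
  exact (smoothed_rep p hσ z).symm

/-- A concave function admits a uniform linear upper bound around a compact ball. -/
lemma exists_expbound (ℓ : Euc d → ℝ) (hconc : ConcaveOn ℝ Set.univ ℓ)
    (hcont : Continuous ℓ) (x₀ : Euc d) (R : ℝ) :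
    ∃ K : ℝ, 0 ≤ K ∧ ∀ z ∈ closedBall x₀ R, ∀ v : Euc d, ℓ (z + v) ≤ ℓ z + K * ‖v‖ := by
  obtain ⟨C, hC⟩ := (isCompact_closedBall x₀ (R+3)).exists_bound_of_continuousOn
    hcont.continuousOn
  have hconcball : ConcaveOn ℝ (ball x₀ (R+3)) ℓ :=
    hconc.subset (Set.subset_univ _) (convex_ball _ _)
  have hlip := hconcball.lipschitzOnWith_of_abs_le (ε := 1) one_pos
    (fun a ha => hC a (mem_closedBall.mpr ha.le))
  set K : ℝ := ((2 * C / 1).toNNReal : ℝ) with hK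
  have hK0 : 0 ≤ K := (2 * C / 1).toNNReal.coe_nonneg
  refine ⟨K, hK0, ?_⟩
  intro z hz
  have hzball : z ∈ ball x₀ (R + 3 - 1) := by
    rw [mem_ball]
    have := mem_closedBall.mp hz
    have hR0 : 0 ≤ R := le_trans dist_nonneg this
    linarith
  -- the small case
  have small : ∀ v : Euc d, ‖v‖ ≤ 1 → ℓ (z + v) ≤ ℓ z + K * ‖v‖ := by
    intro v hv
    have hzv : z + v ∈ ball x₀ (R + 3 - 1) := by
      rw [mem_ball]
      calc dist (z + v) x₀ ≤ dist (z + v) z + dist z x₀ := dist_triangle _ _ _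
        _ ≤ 1 + R := by
            have h1 : dist (z + v) z = ‖v‖ := by rw [dist_eq_norm]; simp
            have := mem_closedBall.mp hz
            linarith
        _ < R + 3 - 1 := by linarith
    have := hlip.dist_le_mul (z + v) hzv z hzball
    rw [Real.dist_eq, dist_eq_norm, add_sub_cancel_left] at this
    have h2 : ℓ (z + v) - ℓ z ≤ |ℓ (z + v) - ℓ z| := le_abs_self _
    linarith [abs_le.mp this |>.2, this, le_trans h2 this]
  intro v
  rcases le_or_gt ‖v‖ 1 with hv | hv
  · exact small v hv
  · have hvpos : 0 < ‖v‖ := by linarith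
    set t : ℝ := ‖v‖⁻¹ with ht
    have htpos : 0 < t := inv_pos.mpr hvpos
    have ht1 : t ≤ 1 := by
      rw [ht]
      exact inv_le_one_of_one_le₀ hv.le
    have hcomb := hconc.2 (Set.mem_univ z) (Set.mem_univ (z + v))
      (by linarith : (0:ℝ) ≤ 1 - t) htpos.le (by ring)
    have hpt : (1 - t) • z + t • (z + v) = z + t • v := by module
    rw [hpt] at hcomb
    have hnorm : ‖t • v‖ = 1 := by
      rw [norm_smul, Real.norm_eq_abs, abs_of_pos htpos, ht]
      field_simp
    have hs := small (t • v) (by rw [hnorm])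
    rw [hnorm, mul_one] at hs
    have hthis : t * ℓ (z + v) ≤ t * ℓ z + K := by
      have := le_trans hcomb hs
      simp only [smul_eq_mul] at this ⊢
      nlinarith
    have hvt : ‖v‖ * t = 1 := by rw [ht]; field_simp
    calc ℓ (z + v) = ‖v‖ * t * ℓ (z + v) := by rw [hvt, one_mul]
      _ = ‖v‖ * (t * ℓ (z + v)) := by ring
      _ ≤ ‖v‖ * (t * ℓ z + K) := mul_le_mul_of_nonneg_left hthis hvpos.le
      _ = ‖v‖ * t * ℓ z + ‖v‖ * K := by ring
      _ = ℓ z + K * ‖v‖ := by rw [hvt]; ring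

/-- A positive, continuous, log-concave probability density is bounded. -/
lemma exists_bound (p : Euc d → ℝ) (hpint : Integrable p)
    (hconc : ConcaveOn ℝ Set.univ (fun x => Real.log (p x)))
    (hpos : ∀ x, 0 < p x) (hcont : Continuous p) (x₀ : Euc d)
    (hint : (∫ x : Euc d, p x) = 1) :
    ∃ M : ℝ, 1 ≤ M ∧ ∀ x, p x ≤ M := by
  obtain ⟨a, ha, hamin⟩ := (isCompact_closedBall x₀ 1).exists_isMinOn
    ⟨x₀, mem_closedBall_self zero_le_one⟩ hcont.continuousOn
  set δ : ℝ := p a with hδdef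
  have hδ : 0 < δ := hpos a
  set V : ℝ := (volume (closedBall (0 : Euc d) (1/2))).toReal with hV
  have hVpos : 0 < V := by
    rw [hV]
    refine ENNReal.toReal_pos (measure_closedBall_pos volume _ (by norm_num)).ne' ?_
    exact measure_closedBall_lt_top.ne
  refine ⟨max (Real.exp (2 * Real.log (1/V) - Real.log δ)) 1, le_max_right _ _, fun x => ?_⟩
  set m₀ : Euc d := midpoint ℝ x x₀ with hm₀
  set c : ℝ := (Real.log (p x) + Real.log δ) / 2 with hc
  have hBlow : ∀ m ∈ closedBall m₀ (1/2), Real.exp c ≤ p m := by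
    intro m hm
    set b : Euc d := (2:ℝ) • m - x with hb
    have hbmem : b ∈ closedBall x₀ 1 := by
      rw [mem_closedBall, dist_eq_norm]
      have hbeq : b - x₀ = (2:ℝ) • (m - m₀) := by
        rw [hb, hm₀, midpoint_eq_smul_add, show ((⅟2 : ℝ)) = (1/2 : ℝ) by norm_num]
        module
      rw [hbeq, norm_smul]
      have := mem_closedBall.mp hm
      rw [dist_eq_norm] at this
      simp only [Real.norm_ofNat]
      linarith
    have hcomb := hconc.2 (Set.mem_univ x) (Set.mem_univ b)
      (by norm_num : (0:ℝ) ≤ 1/2) (by norm_num : (0:ℝ) ≤ 1/2) (by norm_num)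
    have hpt : (1/2 : ℝ) • x + (1/2 : ℝ) • b = m := by rw [hb]; module
    rw [hpt] at hcomb
    have hbδ : Real.log δ ≤ Real.log (p b) :=
      Real.log_le_log hδ (hamin hbmem)
    have hlm : c ≤ Real.log (p m) := by
      simp only [smul_eq_mul] at hcomb
      rw [hc]
      linarith
    calc Real.exp c ≤ Real.exp (Real.log (p m)) := Real.exp_le_exp.2 hlm
      _ = p m := Real.exp_log (hpos m)
  have hlow : Real.exp c * V ≤ 1 := by
    have h1 : Real.exp c * (volume (closedBall m₀ (1/2))).toReal
        ≤ ∫ z in closedBall m₀ (1/2), p z := by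
      have := setIntegral_ge_of_const_le_real measurableSet_closedBall
        measure_closedBall_lt_top.ne hBlow hpint.integrableOn
      exact this
    have h2 : (∫ z in closedBall m₀ (1/2), p z) ≤ ∫ z, p z :=
      setIntegral_le_integral hpint (Eventually.of_forall fun z => (hpos z).le)
    have h3 : volume (closedBall m₀ (1/2)) = volume (closedBall (0:Euc d) (1/2)) :=
      Measure.addHaar_closedBall_center volume m₀ (1/2)
    rw [h3] at h1
    rw [hint] at h2
    calc Real.exp c * V = Real.exp c * (volume (closedBall (0:Euc d) (1/2))).toReal := rfl
      _ ≤ 1 := le_trans h1 h2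
  have hc1 : Real.exp c ≤ 1 / V := by
    rw [le_div_iff₀ hVpos]
    exact hlow
  have hc2 : c ≤ Real.log (1/V) := by
    rw [← Real.log_exp c]
    exact Real.log_le_log (Real.exp_pos c) hc1
  have hfin : Real.log (p x) ≤ 2 * Real.log (1/V) - Real.log δ := by
    rw [hc] at hc2
    linarith
  calc p x = Real.exp (Real.log (p x)) := (Real.exp_log (hpos x)).symm
    _ ≤ Real.exp (2 * Real.log (1/V) - Real.log δ) := Real.exp_le_exp.2 hfin
    _ ≤ _ := le_max_left _ _

end SmoothAux

set_option maxHeartbeats 1000000 in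
open SmoothAux Metric in
/-- For a log-concave strictly positive prior, the minimisers `x⋆_σ` of the smoothed
proximal objectives converge, as `σ → 0⁺`, to the minimiser `x⋆` of the proximal
objective `F`. -/
theorem smoothed_minimisers_tendsto_prox
    (d : ℕ) (p : Euc d → ℝ)
    (hmeas : Measurable p) (hnonneg : ∀ x, 0 ≤ p x)
    (hint : (∫ x : Euc d, p x) = 1)
    (hlogconcave : ConcaveOn ℝ Set.univ (fun x => Real.log (p x)))
    (hpos : ∀ x, 0 < p x)
    (y : Euc d) (τ : ℝ) (hτ : 0 < τ)
    (xstarσ : ℝ → Euc d)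
    (hmin : ∀ σ : ℝ, 0 < σ → ∀ x, Fsig d p y τ σ (xstarσ σ) ≤ Fsig d p y τ σ x)
    (xstar : Euc d) (hxstar : ∀ x, Fobj d p y τ xstar ≤ Fobj d p y τ x) :
    Tendsto xstarσ (nhdsWithin (0 : ℝ) (Set.Ioi 0)) (nhds xstar) := by
  set ℓ : Euc d → ℝ := fun x => Real.log (p x) with hℓdef
  set l := nhdsWithin (0 : ℝ) (Set.Ioi 0) with hldef
  have hℓcont : Continuous ℓ := by
    rw [← continuousOn_univ]
    exact hlogconcave.continuousOn isOpen_univ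
  have hpcont : Continuous p := by
    have hpe : p = fun x => Real.exp (ℓ x) := funext fun x => (Real.exp_log (hpos x)).symm
    rw [hpe]
    exact Real.continuous_exp.comp hℓcont
  have hpint : Integrable p := by
    by_contra h
    rw [integral_undef h] at hint
    norm_num at hint
  obtain ⟨M, hM1, hM⟩ := exists_bound p hpint hlogconcave hpos hpcont xstar hint
  have hlogM : 0 ≤ Real.log M := Real.log_nonneg hM1
  -- convergence of the smoothed density and its logarithm at every point
  have hsm : ∀ z, Tendsto (fun σ => smoothed d p σ z) l (nhds (p z)) :=
    fun z => smoothed_tendsto hmeas hM hnonneg hpcont z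
  have hlog : ∀ z, Tendsto (fun σ => Real.log (smoothed d p σ z)) l (nhds (ℓ z)) :=
    fun z => ((Real.continuousAt_log (hpos z).ne').tendsto).comp (hsm z)
  -- eventual bound on Fsig σ xstar
  have hFs : Tendsto (fun σ => Fsig d p y τ σ xstar) l (nhds (Fobj d p y τ xstar)) := by
    unfold Fsig Fobj
    exact tendsto_const_nhds.sub ((hlog xstar).const_mul τ)
  have hFev : ∀ᶠ σ in l, Fsig d p y τ σ xstar ≤ Fobj d p y τ xstar + 1 := by
    filter_upwards [hFs.eventually_lt_const (lt_add_one (Fobj d p y τ xstar))] with σ h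
    exact h.le
  have hσpos : ∀ᶠ σ in l, 0 < σ := by
    filter_upwards [self_mem_nhdsWithin] with σ hσ
    exact hσ
  -- the radius of the confining ball
  set R : ℝ := Real.sqrt (2 * (Fobj d p y τ xstar + 1 + τ * Real.log M)) + ‖y - xstar‖ with hR
  have hball : ∀ᶠ σ in l, xstarσ σ ∈ closedBall xstar R := by
    filter_upwards [hFev, hσpos] with σ hF hσ
    set xσ := xstarσ σ with hxσ
    have hs_pos : 0 < smoothed d p σ xσ := smoothed_pos hmeas hM hnonneg hpos hσ _
    have hs_le : smoothed d p σ xσ ≤ M := smoothed_le hmeas hM hnonneg hσ _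
    have hlog_le : Real.log (smoothed d p σ xσ) ≤ Real.log M := Real.log_le_log hs_pos hs_le
    have h1 : (1/2 : ℝ) * ‖y - xσ‖^2 - τ * Real.log M ≤ Fsig d p y τ σ xσ := by
      unfold Fsig
      have := mul_le_mul_of_nonneg_left hlog_le hτ.le
      linarith
    have h2 : Fsig d p y τ σ xσ ≤ Fsig d p y τ σ xstar := hmin σ hσ xstar
    have h3 : ‖y - xσ‖^2 ≤ 2 * (Fobj d p y τ xstar + 1 + τ * Real.log M) := by linarith
    have h4 : ‖y - xσ‖ ≤ Real.sqrt (2 * (Fobj d p y τ xstar + 1 + τ * Real.log M)) := by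
      rw [← Real.sqrt_sq (norm_nonneg (y - xσ))]
      exact Real.sqrt_le_sqrt h3
    rw [mem_closedBall]
    calc dist xσ xstar ≤ dist xσ y + dist y xstar := dist_triangle _ _ _
      _ = ‖y - xσ‖ + ‖y - xstar‖ := by rw [dist_comm xσ y, dist_eq_norm, dist_eq_norm]
      _ ≤ R := by rw [hR]; linarith
  -- exponential upper bound for ℓ around the ball
  obtain ⟨K, hK0, hKbd⟩ := exists_expbound ℓ hlogconcave hℓcont xstar R
  -- the correction factor φ
  set φ : ℝ → ℝ := fun σ => ∫ u : Euc d, Real.exp (K * σ * ‖u‖) * w d u with hφdef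
  have hφ1 : ∀ σ : ℝ, 0 < σ → 1 ≤ φ σ := by
    intro σ hσ
    have hmono : (∫ u : Euc d, w d u) ≤ φ σ := by
      refine integral_mono integrable_w (integrable_exp_mul_w (K * σ)) fun u => ?_
      have : (1:ℝ) ≤ Real.exp (K * σ * ‖u‖) :=
        Real.one_le_exp (by positivity)
      nlinarith [w_pos u]
    rwa [integral_w] at hmono
  have hφlim : Tendsto φ l (nhds 1) := by
    have key : Tendsto φ l (nhds (∫ u : Euc d, w d u)) := by
      refine tendsto_integral_filter_of_dominated_convergence
        (fun u => Real.exp (K * ‖u‖) * w d u) ?_ ?_ (integrable_exp_mul_w K) ?_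
      · filter_upwards with σ
        exact ((Real.continuous_exp.comp (by fun_prop)).mul w_continuous).aestronglyMeasurable
      · filter_upwards [Ioo_mem_nhdsGT_of_mem (Set.mem_Ico.mpr ⟨le_refl (0:ℝ), one_pos⟩)]
          with σ hσ
        filter_upwards with u
        have hσ0 : 0 < σ := hσ.1
        have hσ1 : σ ≤ 1 := hσ.2.le
        rw [Real.norm_eq_abs,
          abs_of_nonneg (mul_nonneg (Real.exp_pos _).le (w_pos u).le)]
        refine mul_le_mul_of_nonneg_right (Real.exp_le_exp.2 ?_) (w_pos u).le
        have hprod : 0 ≤ K * ‖u‖ * (1 - σ) :=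
          mul_nonneg (mul_nonneg hK0 (norm_nonneg u)) (by linarith)
        nlinarith [hprod]
      · filter_upwards with u
        have h1 : Tendsto (fun σ : ℝ => Real.exp (K * σ * ‖u‖)) l (nhds 1) := by
          have hc : Continuous (fun σ : ℝ => Real.exp (K * σ * ‖u‖)) := by fun_prop
          have := (hc.tendsto 0).mono_left (nhdsWithin_le_nhds (s := Set.Ioi (0:ℝ)))
          simpa using this
        simpa using h1.mul (tendsto_const_nhds (x := w d u))
    rwa [integral_w] at key
  -- smoothed density upper bound on the ball
  have hup : ∀ σ : ℝ, 0 < σ → ∀ z ∈ closedBall xstar R, smoothed d p σ z ≤ p z * φ σ := by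
    intro σ hσ z hz
    rw [smoothed_rep p hσ z]
    have hpt : ∀ u : Euc d, p (z - σ • u) * w d u
        ≤ p z * (Real.exp (K * σ * ‖u‖) * w d u) := by
      intro u
      have hv := hKbd z hz (-(σ • u))
      rw [norm_neg, norm_smul, Real.norm_eq_abs, abs_of_pos hσ] at hv
      have hzv : z + -(σ • u) = z - σ • u := by abel
      rw [hzv] at hv
      have hple : p (z - σ • u) ≤ p z * Real.exp (K * σ * ‖u‖) := by
        have := Real.exp_le_exp.2 hv
        rw [Real.exp_add] at this
        rw [Real.exp_log (hpos _), Real.exp_log (hpos _)] at this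
        calc p (z - σ • u) ≤ p z * Real.exp (K * (σ * ‖u‖)) := this
          _ = p z * Real.exp (K * σ * ‖u‖) := by rw [mul_assoc]
      calc p (z - σ • u) * w d u ≤ (p z * Real.exp (K * σ * ‖u‖)) * w d u :=
            mul_le_mul_of_nonneg_right hple (w_pos u).le
        _ = p z * (Real.exp (K * σ * ‖u‖) * w d u) := by ring
    calc (∫ u : Euc d, p (z - σ • u) * w d u)
        ≤ ∫ u : Euc d, p z * (Real.exp (K * σ * ‖u‖) * w d u) :=
          integral_mono (integrand_integrable hmeas hM hnonneg σ z)
            ((integrable_exp_mul_w (K * σ)).const_mul _) hpt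
      _ = p z * φ σ := by rw [integral_const_mul]
  -- strong convexity of Fobj at the minimiser
  have hstrong : ∀ x, Fobj d p y τ xstar + (1/4 : ℝ) * ‖x - xstar‖^2 ≤ Fobj d p y τ x := by
    intro x
    set m : Euc d := (1/2 : ℝ) • x + (1/2 : ℝ) • xstar with hm
    have hquad : ‖y - m‖^2
        = (1/2)*‖y - x‖^2 + (1/2)*‖y - xstar‖^2 - (1/4)*‖x - xstar‖^2 := by
      have hym : y - m = (1/2 : ℝ) • ((y - x) + (y - xstar)) := by rw [hm]; module
      rw [hym, norm_smul]
      have hpar := parallelogram_law_with_norm ℝ (y - x) (y - xstar)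
      have hsub : (y - x) - (y - xstar) = xstar - x := by abel
      rw [hsub, norm_sub_rev xstar x] at hpar
      rw [Real.norm_eq_abs, show |(1/2 : ℝ)| = 1/2 by norm_num]
      nlinarith [hpar]
    have hcomb := hlogconcave.2 (Set.mem_univ x) (Set.mem_univ xstar)
      (by norm_num : (0:ℝ) ≤ 1/2) (by norm_num : (0:ℝ) ≤ 1/2) (by norm_num)
    simp only [smul_eq_mul] at hcomb
    have hFm := hxstar m
    have hτcomb := mul_le_mul_of_nonneg_left hcomb hτ.le
    unfold Fobj at hFm ⊢
    rw [hquad] at hFm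
    have hℓm : (1/2 : ℝ) * Real.log (p x) + (1/2 : ℝ) * Real.log (p xstar)
        ≤ Real.log (p m) := hcomb
    nlinarith [mul_le_mul_of_nonneg_left hℓm hτ.le]
  -- the key squeeze inequality
  have hkey : ∀ᶠ σ in l, (1/4 : ℝ) * ‖xstarσ σ - xstar‖^2
      ≤ τ * Real.log (φ σ) + τ * (ℓ xstar - Real.log (smoothed d p σ xstar)) := by
    filter_upwards [hball, hσpos] with σ hbσ hσ
    set xσ := xstarσ σ with hxσ
    have h1 : smoothed d p σ xσ ≤ p xσ * φ σ := hup σ hσ xσ hbσ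
    have hspos : 0 < smoothed d p σ xσ := smoothed_pos hmeas hM hnonneg hpos hσ _
    have hφpos : 0 < φ σ := lt_of_lt_of_le one_pos (hφ1 σ hσ)
    have hlog1 : Real.log (smoothed d p σ xσ) ≤ ℓ xσ + Real.log (φ σ) := by
      calc Real.log (smoothed d p σ xσ) ≤ Real.log (p xσ * φ σ) := Real.log_le_log hspos h1
        _ = ℓ xσ + Real.log (φ σ) := Real.log_mul (hpos xσ).ne' hφpos.ne'
    have hA : Fobj d p y τ xσ - Fsig d p y τ σ xσ ≤ τ * Real.log (φ σ) := by
      unfold Fobj Fsig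
      have := mul_le_mul_of_nonneg_left hlog1 hτ.le
      have hexp : τ * (ℓ xσ + Real.log (φ σ)) = τ * ℓ xσ + τ * Real.log (φ σ) := by ring
      rw [hexp] at this
      have hℓx : Real.log (p xσ) = ℓ xσ := rfl
      rw [hℓx]
      linarith
    have hB : Fsig d p y τ σ xσ ≤ Fsig d p y τ σ xstar := hmin σ hσ xstar
    have hC : Fsig d p y τ σ xstar - Fobj d p y τ xstar
        = τ * (ℓ xstar - Real.log (smoothed d p σ xstar)) := by
      unfold Fsig Fobj
      have hℓx : Real.log (p xstar) = ℓ xstar := rfl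
      rw [hℓx]
      ring
    have hD := hstrong xσ
    linarith
  -- the right-hand side tends to zero
  have hrhs : Tendsto (fun σ => τ * Real.log (φ σ)
      + τ * (ℓ xstar - Real.log (smoothed d p σ xstar))) l (nhds 0) := by
    have h1 : Tendsto (fun σ => Real.log (φ σ)) l (nhds 0) := by
      have := ((Real.continuousAt_log one_ne_zero).tendsto).comp hφlim
      simpa [Function.comp_def] using this
    have h2 : Tendsto (fun σ => ℓ xstar - Real.log (smoothed d p σ xstar)) l (nhds 0) := by
      have := (tendsto_const_nhds (x := ℓ xstar) (f := l)).sub (hlog xstar)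
      simpa using this
    have := (h1.const_mul τ).add (h2.const_mul τ)
    simpa using this
  -- squeeze
  have hsq : Tendsto (fun σ => ‖xstarσ σ - xstar‖^2) l (nhds 0) := by
    have hg : Tendsto (fun σ => 4 * (τ * Real.log (φ σ)
        + τ * (ℓ xstar - Real.log (smoothed d p σ xstar)))) l (nhds 0) := by
      simpa using hrhs.const_mul 4
    refine squeeze_zero' ?_ ?_ hg
    · filter_upwards with σ
      positivity
    · filter_upwards [hkey] with σ h
      linarith
  rw [tendsto_iff_dist_tendsto_zero]
  have hdist : (fun σ => dist (xstarσ σ) xstar)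
      = fun σ => Real.sqrt (‖xstarσ σ - xstar‖^2) := by
    funext σ
    rw [Real.sqrt_sq (norm_nonneg _), dist_eq_norm]
  rw [hdist]
  have hcomp := (Real.continuous_sqrt.tendsto 0).comp hsq
  rw [Real.sqrt_zero] at hcomp
  exact hcomp

end
end

section
/- Let p be a probability density on ℝ^d that is log-concave and strictly positive on ℝ^d. Then for every compact set K ⊂ ℝ^d, sup_{x ∈ K} | ln p_σ(x) − ln p(x) | → 0 as σ → 0⁺; that is, ln p_σ converges to ln p uniformly on compact sets as the smoothing level vanishes. -/
open MeasureTheory Real Filter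

noncomputable section

namespace LogSmoothAux

open Topology Metric

lemma gauss_integral (d : ℕ) {b : ℝ} (hb : 0 < b) :
    ∫ v : Euc d, rexp (-b * ‖v‖ ^ 2) = (π / b) ^ ((d : ℝ) / 2) := by
  rw [GaussianFourier.integral_rexp_neg_mul_sq_norm hb, finrank_euclideanSpace_fin]

lemma gauss_integrable (d : ℕ) {b : ℝ} (hb : 0 < b) :
    Integrable (fun v : Euc d => rexp (-b * ‖v‖ ^ 2)) := by
  have h := (GaussianFourier.integrable_cexp_neg_mul_sq_norm_add (V := Euc d)
      (b := (b : ℂ)) (by simpa using hb) 0 0).re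
  refine h.congr (Filter.Eventually.of_forall fun v => ?_)
  have : (-↑b * (‖v‖:ℂ) ^ 2 + 0 * ((inner ℝ (0 : Euc d) v : ℝ) : ℂ)) = ((-(b * ‖v‖ ^ 2) : ℝ) : ℂ) := by
    push_cast; ring
  simp only [RCLike.re_to_complex]
  rw [this, Complex.exp_ofReal_re, neg_mul]

lemma bounded_of_logconcave {d : ℕ} (p : Euc d → ℝ)
    (hpos : ∀ x, 0 < p x)
    (hconc : ConcaveOn ℝ Set.univ fun x => Real.log (p x))
    (hint : (∫ x : Euc d, p x) = 1)
    (hpint : Integrable p) (hpcont : Continuous p) :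
    ∃ M : ℝ, 0 < M ∧ ∀ x, p x ≤ M := by
  -- a ball on which `p` is bounded below
  set c := p 0 / 2 with hc
  have hcpos : 0 < c := half_pos (hpos 0)
  have hev : ∀ᶠ y in 𝓝 (0 : Euc d), c < p y :=
    (hpcont.tendsto 0).eventually_const_lt (half_lt_self (hpos 0))
  obtain ⟨r, hrpos, hr⟩ := Metric.eventually_nhds_iff_ball.mp hev
  set κ := (volume (Metric.ball (0 : Euc d) (r / 2))).toReal with hκ
  have hκpos : 0 < κ := by
    rw [hκ]
    refine ENNReal.toReal_pos (measure_ball_pos volume _ (by positivity)).ne' ?_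
    exact measure_ball_lt_top.ne
  refine ⟨rexp (2 * Real.log κ⁻¹ - Real.log c), Real.exp_pos _, fun x => ?_⟩
  set L := rexp ((Real.log (p x) + Real.log c) / 2) with hL
  have key : ∀ w ∈ Metric.ball ((2 : ℝ)⁻¹ • x) (r / 2), L ≤ p w := by
    intro w hw
    set y := (2 : ℝ) • w - x with hy
    have hyball : y ∈ Metric.ball (0 : Euc d) r := by
      rw [Metric.mem_ball] at hw ⊢
      rw [dist_eq_norm] at hw ⊢
      have : y - 0 = (2 : ℝ) • (w - (2 : ℝ)⁻¹ • x) := by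
        rw [hy]; module
      rw [this, norm_smul]
      simp only [Real.norm_ofNat]
      linarith
    have hcy : c ≤ p y := (hr y hyball).le
    have hmid : (1 / 2 : ℝ) • x + (1 / 2 : ℝ) • y = w := by
      rw [hy]; module
    have hcc := hconc.2 (Set.mem_univ x) (Set.mem_univ y)
      (by norm_num : (0:ℝ) ≤ 1/2) (by norm_num : (0:ℝ) ≤ 1/2) (by norm_num)
    rw [hmid] at hcc
    have hlogy : Real.log c ≤ Real.log (p y) :=
      Real.log_le_log hcpos hcy
    have : (Real.log (p x) + Real.log c) / 2 ≤ Real.log (p w) := by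
      simp only [smul_eq_mul] at hcc
      linarith
    calc L ≤ rexp (Real.log (p w)) := Real.exp_le_exp.mpr this
      _ = p w := Real.exp_log (hpos w)
  have hineq : L * κ ≤ 1 := by
    have h1 : L * κ ≤ ∫ w in Metric.ball ((2 : ℝ)⁻¹ • x) (r / 2), p w := by
      have := setIntegral_ge_of_const_le_real (μ := volume) measurableSet_ball
        measure_ball_lt_top.ne key hpint.integrableOn
      rwa [measureReal_def, Measure.addHaar_ball_center] at this
    have h2 : (∫ w in Metric.ball ((2 : ℝ)⁻¹ • x) (r / 2), p w) ≤ 1 := by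
      rw [← hint]
      exact setIntegral_le_integral hpint (Filter.Eventually.of_forall fun w => (hpos w).le)
    linarith
  have hLle : L ≤ κ⁻¹ := by
    rw [← one_div]
    exact (le_div_iff₀ hκpos).mpr hineq
  have hlog : (Real.log (p x) + Real.log c) / 2 ≤ Real.log κ⁻¹ := by
    have := Real.log_le_log (Real.exp_pos _) hLle
    rwa [Real.log_exp] at this
  calc p x = rexp (Real.log (p x)) := (Real.exp_log (hpos x)).symm
    _ ≤ rexp (2 * Real.log κ⁻¹ - Real.log c) := Real.exp_le_exp.mpr (by linarith)

set_option maxHeartbeats 1000000 in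
lemma smoothed_bounds {d : ℕ} (p : Euc d → ℝ) (hpint : Integrable p)
    (hnonneg : ∀ x, 0 ≤ p x) {M : ℝ} (hM : ∀ x, p x ≤ M)
    {σ δ εδ : ℝ} (hσ : 0 < σ) (hδ : 0 < δ) (hεδ : 0 ≤ εδ) {z : Euc d}
    (hub : ∀ x ∈ Metric.ball z δ, p x ≤ p z + εδ)
    (hlb : ∀ x ∈ Metric.ball z δ, p z - εδ ≤ p x)
    (hpzεδ : 0 ≤ p z - εδ) :
    (p z - εδ) * (1 - 2 ^ ((d:ℝ)/2) * rexp (-δ^2/(4*σ^2))) ≤ smoothed d p σ z ∧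
      smoothed d p σ z ≤ (p z + εδ) + M * (2 ^ ((d:ℝ)/2) * rexp (-δ^2/(4*σ^2))) := by
  have hMnn : 0 ≤ M := le_trans (hnonneg z) (hM z)
  have h2πσ : (0:ℝ) < 2 * π * σ ^ 2 := by positivity
  set c := (2 * π * σ ^ 2) ^ (-(d : ℝ) / 2) with hcdef
  have hcpos : 0 < c := Real.rpow_pos_of_pos h2πσ _
  set G : Euc d → ℝ := fun x => rexp (-‖z - x‖ ^ 2 / (2 * σ ^ 2)) with hGdef
  have hb2 : (0:ℝ) < (2 * σ ^ 2)⁻¹ := by positivity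
  have hb4 : (0:ℝ) < (4 * σ ^ 2)⁻¹ := by positivity
  have hGeq : ∀ x, G x = rexp (-(2 * σ ^ 2)⁻¹ * ‖x - z‖ ^ 2) := by
    intro x
    have h : -‖z - x‖ ^ 2 / (2 * σ ^ 2) = -(2 * σ ^ 2)⁻¹ * ‖x - z‖ ^ 2 := by
      rw [norm_sub_rev]; field_simp
    simp only [hGdef, h]
  have hGint : Integrable G := by
    have h := (gauss_integrable d hb2).comp_sub_right z
    exact h.congr (Filter.Eventually.of_forall fun x => (hGeq x).symm)
  have hGfull : ∫ x, G x = (2 * π * σ ^ 2) ^ ((d:ℝ)/2) := by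
    calc ∫ x, G x = ∫ x, rexp (-(2 * σ ^ 2)⁻¹ * ‖x - z‖ ^ 2) :=
          integral_congr_ae (Filter.Eventually.of_forall hGeq)
      _ = ∫ x, rexp (-(2 * σ ^ 2)⁻¹ * ‖x‖ ^ 2) :=
          integral_sub_right_eq_self (fun x => rexp (-(2 * σ ^ 2)⁻¹ * ‖x‖ ^ 2)) z
      _ = (π / (2 * σ ^ 2)⁻¹) ^ ((d:ℝ)/2) := gauss_integral d hb2
      _ = (2 * π * σ ^ 2) ^ ((d:ℝ)/2) := by congr 1; rw [div_inv_eq_mul]; ring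
  set G4 : Euc d → ℝ := fun x => rexp (-(4 * σ ^ 2)⁻¹ * ‖x - z‖ ^ 2) with hG4def
  have hG4int : Integrable G4 := (gauss_integrable d hb4).comp_sub_right z
  have hG4nn : ∀ x, 0 ≤ G4 x := fun x => (Real.exp_pos _).le
  have hG4full : ∫ x, G4 x = (4 * π * σ ^ 2) ^ ((d:ℝ)/2) := by
    calc ∫ x, G4 x = ∫ x, rexp (-(4 * σ ^ 2)⁻¹ * ‖x‖ ^ 2) :=
          integral_sub_right_eq_self (fun x => rexp (-(4 * σ ^ 2)⁻¹ * ‖x‖ ^ 2)) z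
      _ = (π / (4 * σ ^ 2)⁻¹) ^ ((d:ℝ)/2) := gauss_integral d hb4
      _ = (4 * π * σ ^ 2) ^ ((d:ℝ)/2) := by congr 1; rw [div_inv_eq_mul]; ring
  have hGnn : ∀ x, 0 ≤ G x := fun x => (Real.exp_pos _).le
  have hPG : Integrable (fun x => p x * G x) :=
    hGint.bdd_mul hpint.aestronglyMeasurable (Filter.Eventually.of_forall fun x => by
      rw [Real.norm_eq_abs, abs_of_nonneg (hnonneg x)]; exact hM x)
  set s := Metric.ball z δ with hsdef
  have hsm : MeasurableSet s := measurableSet_ball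
  set t := rexp (-δ ^ 2 / (4 * σ ^ 2)) with htdef
  have htnn : 0 ≤ t := (Real.exp_pos _).le
  have htail : ∫ x in sᶜ, G x ≤ t * (4 * π * σ ^ 2) ^ ((d:ℝ)/2) := by
    have hpt : ∀ x ∈ sᶜ, G x ≤ t * G4 x := by
      intro x hx
      have hd : δ ≤ ‖x - z‖ := by
        have hx' : ¬ dist x z < δ := fun h => hx (Metric.mem_ball.mpr h)
        rw [dist_eq_norm] at hx'
        linarith [not_lt.mp hx']
      have hsq : δ ^ 2 ≤ ‖x - z‖ ^ 2 := by nlinarith [norm_nonneg (x - z)]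
      have h1 : -‖x - z‖ ^ 2 / (4 * σ ^ 2) ≤ -δ ^ 2 / (4 * σ ^ 2) := by
        rw [div_le_div_iff₀ (by positivity) (by positivity)]
        nlinarith [sq_nonneg σ]
      rw [hGeq x, htdef, hG4def, ← Real.exp_add]
      apply Real.exp_le_exp.mpr
      have heq : -(2 * σ ^ 2)⁻¹ * ‖x - z‖ ^ 2
          = -‖x - z‖ ^ 2 / (4 * σ ^ 2) + -(4 * σ ^ 2)⁻¹ * ‖x - z‖ ^ 2 := by
        field_simp
        ring
      rw [heq]
      linarith
    calc ∫ x in sᶜ, G x ≤ ∫ x in sᶜ, t * G4 x :=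
        setIntegral_mono_on hGint.integrableOn ((hG4int.const_mul t).integrableOn) hsm.compl hpt
      _ = t * ∫ x in sᶜ, G4 x := integral_const_mul _ _
      _ ≤ t * ∫ x, G4 x := by
          apply mul_le_mul_of_nonneg_left _ htnn
          exact setIntegral_le_integral hG4int (Filter.Eventually.of_forall hG4nn)
      _ = t * (4 * π * σ ^ 2) ^ ((d:ℝ)/2) := by rw [hG4full]
  have hcF : c * (2 * π * σ ^ 2) ^ ((d:ℝ)/2) = 1 := by
    rw [hcdef, ← Real.rpow_add h2πσ, neg_div, neg_add_cancel, Real.rpow_zero]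
  have hcA4 : c * (4 * π * σ ^ 2) ^ ((d:ℝ)/2) = 2 ^ ((d:ℝ)/2) := by
    rw [hcdef, neg_div, Real.rpow_neg h2πσ.le, ← Real.inv_rpow h2πσ.le,
      ← Real.mul_rpow (by positivity) (by positivity)]
    congr 1
    field_simp
    ring
  have hsplit : ∫ x, p x * G x = (∫ x in s, p x * G x) + ∫ x in sᶜ, p x * G x :=
    (integral_add_compl hsm hPG).symm
  have hsplitG : ∫ x, G x = (∫ x in s, G x) + ∫ x in sᶜ, G x :=
    (integral_add_compl hsm hGint).symm
  have hup1 : ∫ x in s, p x * G x ≤ (p z + εδ) * ∫ x, G x := by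
    calc ∫ x in s, p x * G x ≤ ∫ x in s, (p z + εδ) * G x :=
        setIntegral_mono_on hPG.integrableOn ((hGint.const_mul _).integrableOn) hsm
          (fun x hx => mul_le_mul_of_nonneg_right (hub x hx) (hGnn x))
      _ = (p z + εδ) * ∫ x in s, G x := integral_const_mul _ _
      _ ≤ (p z + εδ) * ∫ x, G x := by
          apply mul_le_mul_of_nonneg_left _ (by linarith [hnonneg z])
          exact setIntegral_le_integral hGint (Filter.Eventually.of_forall hGnn)
  have hup2 : ∫ x in sᶜ, p x * G x ≤ M * ∫ x in sᶜ, G x := by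
    calc ∫ x in sᶜ, p x * G x ≤ ∫ x in sᶜ, M * G x :=
        setIntegral_mono_on hPG.integrableOn ((hGint.const_mul _).integrableOn) hsm.compl
          (fun x _ => mul_le_mul_of_nonneg_right (hM x) (hGnn x))
      _ = M * ∫ x in sᶜ, G x := integral_const_mul _ _
  have hlow1 : (p z - εδ) * ∫ x in s, G x ≤ ∫ x in s, p x * G x := by
    calc (p z - εδ) * ∫ x in s, G x = ∫ x in s, (p z - εδ) * G x :=
        (integral_const_mul _ _).symm
      _ ≤ ∫ x in s, p x * G x :=
        setIntegral_mono_on ((hGint.const_mul _).integrableOn) hPG.integrableOn hsm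
          (fun x hx => mul_le_mul_of_nonneg_right (hlb x hx) (hGnn x))
  have hlow2 : ∫ x in s, p x * G x ≤ ∫ x, p x * G x :=
    setIntegral_le_integral hPG
      (Filter.Eventually.of_forall fun x => mul_nonneg (hnonneg x) (hGnn x))
  have hsm_eq : smoothed d p σ z = c * ∫ x, p x * G x := by rw [smoothed]
  have hcTl : c * (∫ x in sᶜ, G x) ≤ 2 ^ ((d:ℝ)/2) * t := by
    calc c * (∫ x in sᶜ, G x) ≤ c * (t * (4 * π * σ ^ 2) ^ ((d:ℝ)/2)) :=
        mul_le_mul_of_nonneg_left htail hcpos.le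
      _ = (c * (4 * π * σ ^ 2) ^ ((d:ℝ)/2)) * t := by ring
      _ = 2 ^ ((d:ℝ)/2) * t := by rw [hcA4]
  constructor
  · calc (p z - εδ) * (1 - 2 ^ ((d:ℝ)/2) * t)
        ≤ (p z - εδ) * (c * ∫ x in s, G x) := by
          apply mul_le_mul_of_nonneg_left _ hpzεδ
          have : ∫ x in s, G x = (2 * π * σ ^ 2) ^ ((d:ℝ)/2) - ∫ x in sᶜ, G x := by
            rw [← hGfull]; linarith [hsplitG]
          rw [this, mul_sub, hcF]
          linarith [hcTl]
      _ = c * ((p z - εδ) * ∫ x in s, G x) := by ring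
      _ ≤ c * ∫ x in s, p x * G x := mul_le_mul_of_nonneg_left hlow1 hcpos.le
      _ ≤ c * ∫ x, p x * G x := mul_le_mul_of_nonneg_left hlow2 hcpos.le
      _ = smoothed d p σ z := hsm_eq.symm
  · calc smoothed d p σ z
        = c * ((∫ x in s, p x * G x) + ∫ x in sᶜ, p x * G x) := by rw [hsm_eq, hsplit]
      _ ≤ c * ((p z + εδ) * (∫ x, G x) + M * ∫ x in sᶜ, G x) := by
          apply mul_le_mul_of_nonneg_left (by linarith [hup1, hup2]) hcpos.le
      _ = (p z + εδ) * (c * ∫ x, G x) + M * (c * ∫ x in sᶜ, G x) := by ring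
      _ ≤ (p z + εδ) * 1 + M * (2 ^ ((d:ℝ)/2) * t) := by
          rw [hGfull, hcF]
          have := mul_le_mul_of_nonneg_left hcTl hMnn
          linarith [this]
      _ = (p z + εδ) + M * (2 ^ ((d:ℝ)/2) * t) := by ring

end LogSmoothAux

open LogSmoothAux

set_option maxHeartbeats 2000000

/-- For a log-concave strictly positive density `p`, the smoothed log-density `ln p_σ`
converges to `ln p` uniformly on every compact set as `σ → 0⁺`. -/
theorem log_smoothed_tendsto_uniformly_on_compacts
    (d : ℕ) (p : Euc d → ℝ)
    (hmeas : Measurable p) (hnonneg : ∀ x, 0 ≤ p x)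
    (hint : (∫ x : Euc d, p x) = 1)
    (hlogconcave : ConcaveOn ℝ Set.univ (fun x => Real.log (p x)))
    (hpos : ∀ x, 0 < p x) :
    ∀ K : Set (Euc d), IsCompact K →
      TendstoUniformlyOn (fun σ x => Real.log (smoothed d p σ x))
        (fun x => Real.log (p x)) (nhdsWithin (0 : ℝ) (Set.Ioi 0)) K := by
  intro K hK
  have hpint : Integrable p := by
    by_contra h
    rw [MeasureTheory.integral_undef h] at hint
    norm_num at hint
  have hlogcont : Continuous fun x => Real.log (p x) := by
    rw [← continuousOn_univ]
    exact hlogconcave.continuousOn isOpen_univ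
  have hpcont : Continuous p := by
    have hrw : p = fun x => rexp (Real.log (p x)) :=
      funext fun x => (Real.exp_log (hpos x)).symm
    rw [hrw]
    exact Real.continuous_exp.comp hlogcont
  obtain ⟨M, hMpos, hM⟩ :=
    bounded_of_logconcave p hpos hlogconcave hint hpint hpcont
  rcases K.eq_empty_or_nonempty with rfl | hKne
  · intro u hu
    filter_upwards [self_mem_nhdsWithin] with σ _
    simp
  rw [Metric.tendstoUniformlyOn_iff]
  intro ε hε
  obtain ⟨x₀, hx₀K, hx₀⟩ := hK.exists_isMinOn hKne hpcont.continuousOn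
  set m := p x₀ with hmdef
  have hmpos : 0 < m := hpos x₀
  have hmle : ∀ z ∈ K, m ≤ p z := fun z hz => hx₀ hz
  set a := rexp (-(ε / 2)) with hadef
  set b := rexp (ε / 2) with hbdef
  have hapos : 0 < a := Real.exp_pos _
  have ha1 : a < 1 := by
    rw [hadef, ← Real.exp_zero]
    exact Real.exp_lt_exp.mpr (by linarith)
  have hb1 : 1 < b := by
    rw [hbdef, ← Real.exp_zero]
    exact Real.exp_lt_exp.mpr (by linarith)
  set K' := Metric.cthickening 1 K with hK'def
  have hK'c : IsCompact K' := hK.cthickening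
  have hKK' : K ⊆ K' := Metric.self_subset_cthickening K
  set εδ := min ((b - 1) * m / 2) ((1 - a) * m / 2) with hεδdef
  have hεδpos : 0 < εδ := lt_min (by nlinarith) (by nlinarith)
  obtain ⟨δ₀, hδ₀pos, hδ₀⟩ := Metric.uniformContinuousOn_iff.mp
    (hK'c.uniformContinuousOn_of_continuous hpcont.continuousOn) εδ hεδpos
  set δ := min δ₀ 1 with hδdef
  have hδpos : 0 < δ := lt_min hδ₀pos one_pos
  have hδ1 : δ ≤ 1 := min_le_right _ _
  set T := fun σ : ℝ => (2:ℝ) ^ ((d:ℝ)/2) * rexp (-δ ^ 2 / (4 * σ ^ 2)) with hTdef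
  have hTtend : Tendsto T (nhdsWithin (0:ℝ) (Set.Ioi 0)) (nhds 0) := by
    have h2' : Tendsto (fun σ : ℝ => σ ^ 2) (nhdsWithin (0:ℝ) (Set.Ioi 0))
        (nhdsWithin (0:ℝ) (Set.Ioi 0)) := by
      apply tendsto_nhdsWithin_of_tendsto_nhds_of_eventually_within
      · have : Tendsto (fun σ : ℝ => σ ^ 2) (nhds 0) (nhds 0) := by
          simpa using ((continuous_pow 2).tendsto (0:ℝ))
        exact this.mono_left nhdsWithin_le_nhds
      · filter_upwards [self_mem_nhdsWithin] with σ hσ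
        exact pow_pos (Set.mem_Ioi.mp hσ) 2
    have h3 : Tendsto (fun σ : ℝ => (σ ^ 2)⁻¹) (nhdsWithin (0:ℝ) (Set.Ioi 0)) atTop :=
      tendsto_inv_nhdsGT_zero.comp h2'
    have h4 : Tendsto (fun σ : ℝ => δ ^ 2 / (4 * σ ^ 2))
        (nhdsWithin (0:ℝ) (Set.Ioi 0)) atTop := by
      have h5 := h3.const_mul_atTop (show (0:ℝ) < δ ^ 2 / 4 by positivity)
      refine h5.congr fun σ => ?_
      rw [← div_eq_mul_inv, div_div]
    have h6 : Tendsto (fun σ : ℝ => rexp (-δ ^ 2 / (4 * σ ^ 2)))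
        (nhdsWithin (0:ℝ) (Set.Ioi 0)) (nhds 0) := by
      have := Real.tendsto_exp_neg_atTop_nhds_zero.comp h4
      refine this.congr fun σ => ?_
      simp [Function.comp, neg_div]
    simpa using h6.const_mul ((2:ℝ) ^ ((d:ℝ)/2))
  have hev1 : ∀ᶠ σ in nhdsWithin (0:ℝ) (Set.Ioi 0), M * T σ < (b - 1) * m / 2 := by
    have : Tendsto (fun σ => M * T σ) (nhdsWithin (0:ℝ) (Set.Ioi 0)) (nhds 0) := by
      simpa using hTtend.const_mul M
    exact this.eventually_lt_const (by nlinarith)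
  have hev2 : ∀ᶠ σ in nhdsWithin (0:ℝ) (Set.Ioi 0), T σ < (1 - a) / 2 :=
    hTtend.eventually_lt_const (by nlinarith)
  filter_upwards [hev1, hev2, self_mem_nhdsWithin] with σ h1 h2 hσmem
  intro z hz
  have hσ : 0 < σ := hσmem
  have hzK' : z ∈ K' := hKK' hz
  have hballK' : ∀ x ∈ Metric.ball z δ, x ∈ K' := by
    intro x hx
    apply Metric.mem_cthickening_of_dist_le x z 1 K hz
    have := Metric.mem_ball.mp hx
    linarith
  have hub : ∀ x ∈ Metric.ball z δ, p x ≤ p z + εδ := by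
    intro x hx
    have h := hδ₀ x (hballK' x hx) z hzK'
      (lt_of_lt_of_le (Metric.mem_ball.mp hx) (min_le_left _ _))
    rw [Real.dist_eq] at h
    have := abs_lt.mp h
    linarith [this.2]
  have hlb : ∀ x ∈ Metric.ball z δ, p z - εδ ≤ p x := by
    intro x hx
    have h := hδ₀ x (hballK' x hx) z hzK'
      (lt_of_lt_of_le (Metric.mem_ball.mp hx) (min_le_left _ _))
    rw [Real.dist_eq] at h
    have := abs_lt.mp h
    linarith [this.1]
  have hεδ1 : εδ ≤ (b - 1) * m / 2 := min_le_left _ _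
  have hεδ2 : εδ ≤ (1 - a) * m / 2 := min_le_right _ _
  have hpzm : m ≤ p z := hmle z hz
  have hpzεδ : 0 ≤ p z - εδ := by nlinarith
  obtain ⟨hlow, hup⟩ := smoothed_bounds p hpint hnonneg hM hσ hδpos hεδpos.le hub hlb hpzεδ
  have hTnn : 0 ≤ T σ := by positivity
  have hTval : T σ = (2:ℝ) ^ ((d:ℝ)/2) * rexp (-δ ^ 2 / (4 * σ ^ 2)) := rfl
  rw [← hTval] at hlow hup
  have hsmole : smoothed d p σ z ≤ b * p z := by
    have := hM z
    nlinarith [hup, h1, hεδ1, hpzm]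
  have hsmoge : a * p z ≤ smoothed d p σ z := by
    have e1 : p z * ((1 + a) / 2) ≤ p z - εδ := by nlinarith
    have e2 : (1 + a) / 2 ≤ 1 - T σ := by nlinarith
    have e3 : p z * ((1 + a) / 2) * ((1 + a) / 2) ≤ (p z - εδ) * (1 - T σ) := by
      apply mul_le_mul e1 e2 (by nlinarith) (by nlinarith)
    nlinarith [hlow, sq_nonneg (1 - a), hpos z]
  have hsmopos : 0 < smoothed d p σ z :=
    lt_of_lt_of_le (mul_pos hapos (hpos z)) hsmoge
  rw [Real.dist_eq]
  have hlog1 : Real.log (smoothed d p σ z) ≤ Real.log (p z) + ε / 2 := by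
    have h := Real.log_le_log hsmopos hsmole
    rw [Real.log_mul (Real.exp_pos (ε / 2)).ne' (hpos z).ne'] at h
    have hlb' : Real.log b = ε / 2 := by rw [hbdef, Real.log_exp]
    linarith
  have hlog2 : Real.log (p z) - ε / 2 ≤ Real.log (smoothed d p σ z) := by
    have h := Real.log_le_log (mul_pos hapos (hpos z)) hsmoge
    rw [Real.log_mul hapos.ne' (hpos z).ne'] at h
    have hla' : Real.log a = -(ε / 2) := by rw [hadef, Real.log_exp]
    linarith
  rw [abs_lt]
  constructor <;> linarith


end
end
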